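/- arXiv:2310.12511 — 5 statements merged into one kernel-verified Lean document; each statement's English description precedes it below -/
import Mathlib

section
/- Let G be a k×n matrix over F_q of rank k and let C be the code generated by G. For all integers j, i with 1 ≤ j ≤ k and 0 ≤ i ≤ n, the number of j-dimensional subcodes D of C with support weight χ(D) = i equals the number of (k−j)-dimensional F_q-subspaces U of F_q^k such that exactly n − i of the n columns of G (counted with multiplicity) belong to U. -/
open Matrix Module

/-- The support weight of a subcode `D ⊆ F^n`: the number of coordinate positions
at which some vector of `D` is nonzero. -/
noncomputable def suppWeight {F : Type} [Semiring F] {n : ℕ} (D : Submodule F (Fin n → F)) : ℕ :=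
  Nat.card {idx : Fin n // ∃ c ∈ D, c idx ≠ 0}

lemma piToDual_apply {F : Type} [Field F] {k : ℕ} (y x : Fin k → F) :
    (Pi.basisFun F (Fin k)).toDual y x = ∑ r, y r * x r := by
  have hx : x = ∑ i, x i • (Pi.basisFun F (Fin k)) i := by
    funext j
    simp [Pi.basisFun_apply, Pi.single_apply]
  conv_lhs => rw [hx]
  rw [map_sum]
  have : ∀ i, ((Pi.basisFun F (Fin k)).toDual y) ((Pi.basisFun F (Fin k)) i) = y i := by
    intro i; rw [Basis.toDual_apply_left]; simp
  simp only [_root_.map_smul, smul_eq_mul, this, mul_comm]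


/-- The number of `j`-dimensional subcodes of the code generated by `G` with support
weight `i` equals the number of `(k-j)`-dimensional subspaces of `F^k` containing
exactly `n - i` of the columns of `G` (with multiplicity). -/
theorem stmt_1 (q k n : ℕ) (F : Type) [Field F] [Fintype F]
    (hF : Fintype.card F = q)
    (G : Matrix (Fin k) (Fin n) F) (hG : G.rank = k)
    (j i : ℕ) (hj1 : 1 ≤ j) (hjk : j ≤ k) (hin : i ≤ n) :
    Nat.card {D : Submodule F (Fin n → F) //
        D ≤ LinearMap.range G.vecMulLinear ∧ Module.finrank F D = j ∧ suppWeight D = i} =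
      Nat.card {U : Submodule F (Fin k → F) //
        Module.finrank F U = k - j ∧ Nat.card {c : Fin n // (fun r => G r c) ∈ U} = n - i} := by
  classical
  set f := G.vecMulLinear with hf_def
  set b := Pi.basisFun F (Fin k) with hb_def
  set ε := b.toDualEquiv with hε_def
  have hεsur : Function.Surjective (ε : (Fin k → F) →ₗ[F] Module.Dual F (Fin k → F)) := by
    rw [LinearEquiv.coe_coe]; exact ε.surjective
  have hεinj : Function.Injective (ε : (Fin k → F) →ₗ[F] Module.Dual F (Fin k → F)) := by
    rw [LinearEquiv.coe_coe]; exact ε.injective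
  have hεapp : ∀ y x : Fin k → F,
      ((ε : (Fin k → F) →ₗ[F] Module.Dual F (Fin k → F)) y) x = ∑ r, y r * x r := by
    intro y x
    rw [LinearEquiv.coe_coe, hε_def, Basis.toDualEquiv_apply, piToDual_apply]
  -- rank facts
  have hrange : Module.finrank F (LinearMap.range f) = k := by
    have h1 : Gᵀ.mulVecLin = f := Matrix.mulVecLin_transpose G
    have h2 : Gᵀ.rank = k := by rw [Matrix.rank_transpose]; exact hG
    rw [Matrix.rank, h1] at h2
    exact h2
  have hinj : Function.Injective f := by
    rw [← LinearMap.ker_eq_bot]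
    have := f.finrank_range_add_finrank_ker
    rw [hrange] at this
    have hdom : Module.finrank F (Fin k → F) = k := by simp
    rw [hdom] at this
    have hker : Module.finrank F (LinearMap.ker f) = 0 := by omega
    exact Submodule.finrank_eq_zero.mp hker
  -- the maps
  set A : Submodule F (Fin n → F) → Submodule F (Fin k → F) :=
    fun D => ((D.comap f).dualAnnihilator).comap (ε : (Fin k → F) →ₗ[F] Module.Dual F (Fin k → F))
    with hA_def
  set B : Submodule F (Fin k → F) → Submodule F (Fin n → F) :=
    fun U => ((U.map (ε : (Fin k → F) →ₗ[F] Module.Dual F (Fin k → F))).dualCoannihilator).map f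
    with hB_def
  -- inverse properties
  have hBA : ∀ D : Submodule F (Fin n → F), D ≤ LinearMap.range f → B (A D) = D := by
    intro D hle
    simp only [hA_def, hB_def]
    rw [Submodule.map_comap_eq_of_surjective hεsur,
      Subspace.dualAnnihilator_dualCoannihilator_eq,
      Submodule.map_comap_eq, inf_eq_right.mpr hle]
  have hAB : ∀ U : Submodule F (Fin k → F), A (B U) = U := by
    intro U
    simp only [hA_def, hB_def]
    rw [Submodule.comap_map_eq_of_injective hinj,
      Subspace.dualCoannihilator_dualAnnihilator_eq,
      Submodule.comap_map_eq_of_injective hεinj]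
  -- finrank transfer
  have hAfr : ∀ W : Submodule F (Fin k → F),
      Module.finrank F (A (W.map f)) + Module.finrank F W = k := by
    intro W
    have h1 : (W.map f).comap f = W := Submodule.comap_map_eq_of_injective hinj W
    have h2 : Module.finrank F (A (W.map f)) = Module.finrank F W.dualAnnihilator := by
      show Module.finrank F
        ((((W.map f).comap f).dualAnnihilator).comap
          (ε : (Fin k → F) →ₗ[F] Module.Dual F (Fin k → F))) = _
      rw [h1, Submodule.comap_equiv_eq_map_symm]
      exact (LinearEquiv.finrank_map_eq _ _)
    rw [h2]
    have h3 := Subspace.finrank_add_finrank_dualCoannihilator_eq W.dualAnnihilator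
    rw [Subspace.dualAnnihilator_dualCoannihilator_eq] at h3
    simpa using h3
  have hWfr : ∀ W : Submodule F (Fin k → F),
      Module.finrank F (W.map f) = Module.finrank F W :=
    fun W => (LinearEquiv.finrank_eq (Submodule.equivMapOfInjective f hinj W)).symm
  -- membership characterization
  have hmem : ∀ (W : Submodule F (Fin k → F)) (c : Fin n),
      ((fun r => G r c) ∈ A (W.map f)) ↔ ∀ x ∈ W, ∑ r, x r * G r c = 0 := by
    intro W c
    have h1 : (W.map f).comap f = W := Submodule.comap_map_eq_of_injective hinj W
    simp only [hA_def, h1, Submodule.mem_comap, Submodule.mem_dualAnnihilator]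
    constructor
    · intro h x hx
      have := h x hx
      rw [hεapp] at this
      rw [← this]
      exact Finset.sum_congr rfl fun r _ => mul_comm _ _
    · intro h x hx
      rw [hεapp, ← h x hx]
      exact Finset.sum_congr rfl fun r _ => mul_comm _ _
  -- support weight counting
  have hcount : ∀ W : Submodule F (Fin k → F),
      suppWeight (W.map f) + Nat.card {c : Fin n // (fun r => G r c) ∈ A (W.map f)} = n := by
    intro W
    have hQ : ∀ idx : Fin n, (∃ c ∈ W.map f, c idx ≠ 0) ↔
        ¬ ((fun r => G r idx) ∈ A (W.map f)) := by
      intro idx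
      rw [hmem W idx]
      push_neg
      constructor
      · rintro ⟨v, hv, hne⟩
        obtain ⟨x, hx, rfl⟩ := Submodule.mem_map.mp hv
        refine ⟨x, hx, ?_⟩
        have : f x idx = ∑ r, x r * G r idx := by
          simp [hf_def, Matrix.vecMul, dotProduct]
        rwa [this] at hne
      · rintro ⟨x, hx, hne⟩
        refine ⟨f x, Submodule.mem_map_of_mem hx, ?_⟩
        have : f x idx = ∑ r, x r * G r idx := by
          simp [hf_def, Matrix.vecMul, dotProduct]
        rwa [this]
    unfold suppWeight
    rw [Nat.card_eq_fintype_card, Nat.card_eq_fintype_card]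
    rw [Fintype.card_congr (Equiv.subtypeEquivRight hQ)]
    rw [Fintype.card_subtype_compl]
    have hle := Fintype.card_subtype_le (fun c : Fin n => (fun r => G r c) ∈ A (W.map f))
    simp only [Fintype.card_fin] at *
    omega
  have hsupple : ∀ W : Submodule F (Fin k → F), suppWeight (W.map f) ≤ n := by
    intro W
    have := hcount W
    omega
  -- the condition transfer
  have hcond : ∀ D : Submodule F (Fin n → F), D ≤ LinearMap.range f →
      ((Module.finrank F D = j ∧ suppWeight D = i) ↔
       (Module.finrank F (A D) = k - j ∧
        Nat.card {c : Fin n // (fun r => G r c) ∈ A D} = n - i)) := by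
    intro D hle
    set W := D.comap f with hW_def
    have hDW : W.map f = D := by
      rw [hW_def, Submodule.map_comap_eq, inf_eq_right.mpr hle]
    rw [← hDW]
    have h1 := hAfr W
    have h2 := hWfr W
    have h3 := hcount W
    constructor
    · rintro ⟨hj', hi'⟩
      constructor
      · omega
      · omega
    · rintro ⟨hj', hi'⟩
      constructor
      · omega
      · omega
  -- assemble the bijection
  apply Nat.card_congr
  refine ⟨fun D => ⟨A D.1, (hcond D.1 D.2.1).mp D.2.2⟩,
         fun U => ⟨B U.1, LinearMap.map_le_range, ?_⟩, ?_, ?_⟩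
  · have h := (hcond (B U.1) LinearMap.map_le_range)
    rw [hAB U.1] at h
    exact h.mpr U.2
  · rintro ⟨D, hle, h⟩
    exact Subtype.ext (hBA D hle)
  · rintro ⟨U, h⟩
    exact Subtype.ext (hAB U)
end

section
/- Let k ≥ 1, n = (q^k − 1)/(q − 1), and let G be a k×n matrix over F_q whose columns consist of exactly one nonzero vector from each 1-dimensional subspace of F_q^k (a generator matrix of the q-ary Simplex code). Let ℓ ≥ 1 and let K be a field with q^ℓ elements containing F_q as a subfield. Then for every integer w ≥ 1, the number of codewords of Hamming weight w in the lifted code {xG : x ∈ K^k} ⊆ K^n equals [k, j]_q · (q^ℓ − 1)(q^ℓ − q)⋯(q^ℓ − q^{j−1}) if w = (q^k − q^{k−j})/(q − 1) for some integer j with 1 ≤ j ≤ k, and equals 0 otherwise. -/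
open Matrix Module

/-- The Gaussian binomial coefficient `[n, m]_q`:
`((q^n−1)(q^n−q)⋯(q^n−q^{m−1})) / ((q^m−1)(q^m−q)⋯(q^m−q^{m−1}))` for `0 ≤ m ≤ n`,
and `0` for `m < 0` or `m > n`. -/
def gbinom (q : ℕ) (n m : ℤ) : ℕ :=
  if 0 ≤ m ∧ m ≤ n then
    (∏ i ∈ Finset.range m.toNat, (q ^ n.toNat - q ^ i)) /
      (∏ i ∈ Finset.range m.toNat, (q ^ m.toNat - q ^ i))
  else 0

section Aux

lemma nat_card_sigma_const {ι : Type*} {f : ι → Type*} [Finite ι] [∀ i, Finite (f i)] {c : ℕ}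
    (h : ∀ i, Nat.card (f i) = c) : Nat.card (Σ i, f i) = Nat.card ι * c := by
  have e : (Σ i, f i) ≃ ι × Fin c :=
    (Equiv.sigmaCongrRight (fun i => Finite.equivFinOfCardEq (h i))).trans
      (Equiv.sigmaEquivProd ι (Fin c))
  rw [Nat.card_congr e, Nat.card_prod, Nat.card_eq_fintype_card (α := Fin c), Fintype.card_fin]

variable {F V W : Type*} [Field F] [Fintype F] [AddCommGroup V] [Module F V] [Finite V]
  [AddCommGroup W] [Module F W] [Finite W]

lemma constr_injective_iff {m : ℕ} (b : Basis (Fin m) F V) (s : Fin m → W) :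
    Function.Injective (b.constr F s) ↔ LinearIndependent F s := by
  constructor
  · intro h
    have : LinearIndependent F (⇑(b.constr F s) ∘ b) :=
      b.linearIndependent.map' _ (LinearMap.ker_eq_bot.2 h)
    simpa [Function.comp_def, Basis.constr_basis] using this
  · intro hs
    rw [← LinearMap.ker_eq_bot, LinearMap.ker_eq_bot']
    intro x hx
    have hrep : ∑ i, b.repr x i • b i = x := b.sum_repr x
    have : ∑ i, b.repr x i • s i = 0 := by
      calc ∑ i, b.repr x i • s i = (b.constr F s) (∑ i, b.repr x i • b i) := by
            simp [map_sum, Basis.constr_basis]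
        _ = 0 := by rw [hrep, hx]
    have hz : ∀ i, b.repr x i = 0 := Fintype.linearIndependent_iff.1 hs _ this
    have hrz : b.repr x = 0 := by ext i; simp [hz i]
    exact b.repr.map_eq_zero_iff.1 hrz

lemma card_injective_linearMaps :
    Nat.card {ψ : V →ₗ[F] W // Function.Injective ψ} =
      ∏ s ∈ Finset.range (finrank F V), (Fintype.card F ^ finrank F W - Fintype.card F ^ s) := by
  by_cases h : finrank F V ≤ finrank F W
  · let b := Module.finBasis F V
    have e : {s : Fin (finrank F V) → W // LinearIndependent F s} ≃
        {ψ : V →ₗ[F] W // Function.Injective ψ} :=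
      (Equiv.subtypeEquiv (b.constr F).toEquiv (fun s => (constr_injective_iff b s).symm))
    rw [← Nat.card_congr e, card_linearIndependent h]
    rw [Finset.prod_range fun i => Fintype.card F ^ finrank F W - Fintype.card F ^ i]
  · have : IsEmpty {ψ : V →ₗ[F] W // Function.Injective ψ} := by
      constructor
      rintro ⟨ψ, hψ⟩
      have : LinearIndependent F (⇑ψ ∘ (Module.finBasis F V)) :=
        (Module.finBasis F V).linearIndependent.map' _ (LinearMap.ker_eq_bot.2 hψ)
      have := this.fintype_card_le_finrank
      simp [Fintype.card_fin] at this
      omega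
    rw [Nat.card_of_isEmpty]
    exact (Finset.prod_eq_zero (Finset.mem_range.2 (by omega : finrank F W < finrank F V))
      (by simp)).symm

lemma card_ker_eq_linearMaps (U : Submodule F V) :
    Nat.card {ψ : V →ₗ[F] W // LinearMap.ker ψ = U} =
      ∏ s ∈ Finset.range (finrank F V - finrank F U),
        (Fintype.card F ^ finrank F W - Fintype.card F ^ s) := by
  have hfin : Finite (V ⧸ U) := Quotient.finite _
  have e : {χ : V ⧸ U →ₗ[F] W // Function.Injective χ} ≃
      {ψ : V →ₗ[F] W // LinearMap.ker ψ = U} := by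
    refine ⟨fun χ => ⟨χ.1.comp U.mkQ, ?_⟩, fun ψ => ⟨U.liftQ ψ.1 (le_of_eq ψ.2.symm), ?_⟩, ?_, ?_⟩
    · rw [LinearMap.ker_comp, LinearMap.ker_eq_bot.2 χ.2, Submodule.comap_bot, Submodule.ker_mkQ]
    · rw [← LinearMap.ker_eq_bot]
      exact Submodule.ker_liftQ_eq_bot _ _ _ (le_of_eq ψ.2)
    · rintro ⟨χ, hχ⟩
      apply Subtype.ext
      apply Submodule.linearMap_qext
      rfl
    · rintro ⟨ψ, hψ⟩
      apply Subtype.ext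
      exact Submodule.liftQ_mkQ _ _ _
  rw [← Nat.card_congr e, card_injective_linearMaps]
  congr 2
  rw [← Submodule.finrank_quotient_add_finrank U]
  omega

instance : Finite (Submodule F V) :=
  Finite.of_injective (fun W => (W : Set V)) fun _ _ h => SetLike.ext' h

lemma card_subspaces_mul (m : ℕ) (hm : m ≤ finrank F V) :
    Nat.card {W : Submodule F V // finrank F W = m} *
        ∏ i ∈ Finset.range m, (Fintype.card F ^ m - Fintype.card F ^ i) =
      ∏ i ∈ Finset.range m, (Fintype.card F ^ finrank F V - Fintype.card F ^ i) := by
  classical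
  set g : {s : Fin m → V // LinearIndependent F s} → {W : Submodule F V // finrank F W = m} :=
    fun s => ⟨Submodule.span F (Set.range s.1), by rw [finrank_span_eq_card s.2]; simp⟩ with hg
  have hfib : ∀ W, Nat.card {s // g s = W} =
      ∏ i ∈ Finset.range m, (Fintype.card F ^ m - Fintype.card F ^ i) := by
    rintro ⟨W, hW⟩
    have mem1 : ∀ s : {s : Fin m → V // LinearIndependent F s},
        g s = ⟨W, hW⟩ → ∀ i, s.1 i ∈ W := by
      rintro ⟨s, hs⟩ h i
      have h2 : Submodule.span F (Set.range s) = W := congrArg Subtype.val h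
      rw [← h2]
      exact Submodule.subset_span ⟨i, rfl⟩
    have span2 : ∀ t : Fin m → W, LinearIndependent F t →
        Submodule.span F (Set.range fun i => (t i : V)) = W := by
      intro t ht
      refine Submodule.eq_of_le_of_finrank_eq ?_ ?_
      · rw [Submodule.span_le]; rintro _ ⟨i, rfl⟩; exact (t i).2
      · rw [hW]
        have h3 : LinearIndependent F (⇑W.subtype ∘ t) := ht.map' W.subtype W.ker_subtype
        show finrank F (Submodule.span F (Set.range (⇑W.subtype ∘ t))) = m
        rw [finrank_span_eq_card h3]
        simp
    have e : {s // g s = ⟨W, hW⟩} ≃ {t : Fin m → W // LinearIndependent F t} :=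
      { toFun := fun s => ⟨fun i => ⟨s.1.1 i, mem1 s.1 s.2 i⟩,
          LinearIndependent.of_comp W.subtype s.1.2⟩
        invFun := fun t => ⟨⟨fun i => (t.1 i : V), t.2.map' W.subtype W.ker_subtype⟩,
          Subtype.ext (span2 t.1 t.2)⟩
        left_inv := by rintro ⟨⟨s, hs⟩, h⟩; rfl
        right_inv := by rintro ⟨t, ht⟩; rfl }
    rw [Nat.card_congr e]
    have := card_linearIndependent (K := F) (V := W) (k := m) (by rw [hW])
    rw [this, hW, Finset.prod_range]
  have hli := card_linearIndependent (K := F) (V := V) (k := m) hm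
  have h1 : Nat.card (Σ y, {x // g x = y}) =
      Nat.card {W : Submodule F V // finrank F W = m} *
        ∏ i ∈ Finset.range m, (Fintype.card F ^ m - Fintype.card F ^ i) :=
    nat_card_sigma_const hfib
  rw [← h1, Nat.card_congr (Equiv.sigmaFiberEquiv g), hli, Finset.prod_range]

lemma card_subspaces_codim_mul (j : ℕ) (hj : j ≤ finrank F V) :
    Nat.card {W : Submodule F V // finrank F W = finrank F V - j} *
        ∏ i ∈ Finset.range j, (Fintype.card F ^ j - Fintype.card F ^ i) =
      ∏ i ∈ Finset.range j, (Fintype.card F ^ finrank F V - Fintype.card F ^ i) := by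
  classical
  have hD : Finite (Module.Dual F V) := Finite.of_injective _ DFunLike.coe_injective
  have e : {W : Submodule F V // finrank F W = finrank F V - j} ≃
      {Φ : Submodule F (Module.Dual F V) // finrank F Φ = j} :=
    { toFun := fun W => ⟨W.1.dualAnnihilator, by
        have h := Subspace.finrank_add_finrank_dualCoannihilator_eq W.1.dualAnnihilator
        rw [Subspace.dualAnnihilator_dualCoannihilator_eq] at h
        have := W.2
        omega⟩
      invFun := fun Φ => ⟨Φ.1.dualCoannihilator, by
        have h := Subspace.finrank_add_finrank_dualCoannihilator_eq Φ.1
        have := Φ.2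
        omega⟩
      left_inv := fun W => Subtype.ext Subspace.dualAnnihilator_dualCoannihilator_eq
      right_inv := fun Φ => Subtype.ext Subspace.dualCoannihilator_dualAnnihilator_eq }
  rw [Nat.card_congr e]
  have h2 := card_subspaces_mul (F := F) (V := Module.Dual F V) j
    (by rw [Subspace.dual_finrank_eq]; exact hj)
  rwa [Subspace.dual_finrank_eq] at h2

lemma nat_card_ne_zero {M : Type*} [Zero M] [Finite M] :
    Nat.card {u : M // u ≠ 0} = Nat.card M - 1 := by
  classical
  have := Fintype.ofFinite M
  rw [Nat.card_eq_fintype_card, Nat.card_eq_fintype_card]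
  have h : Fintype.card {u : M // ¬ (u = 0)} = Fintype.card M - 1 := by
    rw [Fintype.card_subtype_compl, Fintype.card_subtype_eq]
  exact h

lemma card_lines_le_mul (U : Submodule F V) :
    Nat.card {L : Submodule F V // finrank F L = 1 ∧ L ≤ U} * (Fintype.card F - 1) =
      Fintype.card F ^ finrank F U - 1 := by
  classical
  set g : {v : V // v ∈ U ∧ v ≠ 0} → {L : Submodule F V // finrank F L = 1 ∧ L ≤ U} :=
    fun v => ⟨Submodule.span F {v.1}, finrank_span_singleton v.2.2,
      (Submodule.span_singleton_le_iff_mem _ _).2 v.2.1⟩ with hg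
  have hfib : ∀ L, Nat.card {v // g v = L} = Fintype.card F - 1 := by
    rintro ⟨L, hL1, hL2⟩
    have e : {v // g v = ⟨L, hL1, hL2⟩} ≃ {u : L // u ≠ 0} :=
      { toFun := fun v => ⟨⟨v.1.1, by
          have h2 : Submodule.span F {v.1.1} = L := congrArg Subtype.val v.2
          exact h2.le (Submodule.mem_span_singleton_self _)⟩,
          fun h => v.1.2.2 (congrArg Subtype.val h)⟩
        invFun := fun u => ⟨⟨u.1.1, hL2 u.1.2, fun h => u.2 (Subtype.ext h)⟩, by
          apply Subtype.ext
          show Submodule.span F {(u.1 : V)} = L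
          refine Submodule.eq_of_le_of_finrank_eq ?_ ?_
          · rw [Submodule.span_singleton_le_iff_mem]; exact u.1.2
          · rw [hL1, finrank_span_singleton (fun h => u.2 (Subtype.ext h))]⟩
        left_inv := by rintro ⟨⟨v, hv⟩, h⟩; rfl
        right_inv := by rintro ⟨⟨u, hu⟩, h⟩; rfl }
    have : Fintype L := Fintype.ofFinite _
    rw [Nat.card_congr e, nat_card_ne_zero, Nat.card_eq_fintype_card,
      card_eq_pow_finrank (K := F) (V := L), hL1, pow_one]
  have h1 : Nat.card (Σ L, {v // g v = L}) =
      Nat.card {L : Submodule F V // finrank F L = 1 ∧ L ≤ U} * (Fintype.card F - 1) :=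
    nat_card_sigma_const hfib
  rw [← h1, Nat.card_congr (Equiv.sigmaFiberEquiv g)]
  have e2 : {v : V // v ∈ U ∧ v ≠ 0} ≃ {u : U // u ≠ 0} :=
    { toFun := fun v => ⟨⟨v.1, v.2.1⟩, fun h => v.2.2 (congrArg Subtype.val h)⟩
      invFun := fun u => ⟨u.1.1, u.1.2, fun h => u.2 (Subtype.ext h)⟩
      left_inv := by rintro ⟨v, hv⟩; rfl
      right_inv := by rintro ⟨⟨u, hu⟩, h⟩; rfl }
  have : Fintype U := Fintype.ofFinite _
  rw [Nat.card_congr e2, nat_card_ne_zero, Nat.card_eq_fintype_card,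
    card_eq_pow_finrank (K := F) (V := U)]

end Aux

section Arith

lemma geo_sub {q d k : ℕ} (hq : 2 ≤ q) (hdk : d ≤ k) :
    (q ^ k - 1) / (q - 1) - (q ^ d - 1) / (q - 1) = (q ^ k - q ^ d) / (q - 1) := by
  have h1 : (q - 1) ∣ q ^ k - 1 := by simpa using Nat.sub_dvd_pow_sub_pow q 1 k
  have h2 : (q - 1) ∣ q ^ d - 1 := by simpa using Nat.sub_dvd_pow_sub_pow q 1 d
  have h3 : (q - 1) ∣ q ^ k - q ^ d := by
    have he : q ^ k - q ^ d = q ^ d * (q ^ (k - d) - 1) := by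
      rw [Nat.mul_sub, mul_one, ← pow_add]
      congr 2
      omega
    rw [he]
    exact Dvd.dvd.mul_left (by simpa using Nat.sub_dvd_pow_sub_pow q 1 (k - d)) _
  have hpos : 0 < q - 1 := by omega
  have e1 := Nat.div_mul_cancel h1
  have e2 := Nat.div_mul_cancel h2
  have e3 := Nat.div_mul_cancel h3
  have hle : q ^ d ≤ q ^ k := Nat.pow_le_pow_right (by omega) hdk
  have h1d : 1 ≤ q ^ d := Nat.one_le_pow _ _ (by omega)
  apply Nat.sub_eq_of_eq_add
  apply Nat.eq_of_mul_eq_mul_right hpos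
  rw [Nat.add_mul, e1, e2, e3]
  omega

lemma wexp_inj {q d d' k : ℕ} (hq : 2 ≤ q) (hd : d ≤ k) (hd' : d' ≤ k)
    (h : (q ^ k - q ^ d) / (q - 1) = (q ^ k - q ^ d') / (q - 1)) : d = d' := by
  have h3 : ∀ t ≤ k, (q - 1) ∣ q ^ k - q ^ t := by
    intro t ht
    have he : q ^ k - q ^ t = q ^ t * (q ^ (k - t) - 1) := by
      rw [Nat.mul_sub, mul_one, ← pow_add]
      congr 2
      omega
    rw [he]
    exact Dvd.dvd.mul_left (by simpa using Nat.sub_dvd_pow_sub_pow q 1 (k - t)) _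
  have hpos : 0 < q - 1 := by omega
  have e1 := Nat.div_mul_cancel (h3 d hd)
  have e2 := Nat.div_mul_cancel (h3 d' hd')
  have hle : q ^ d ≤ q ^ k := Nat.pow_le_pow_right (by omega) hd
  have hle' : q ^ d' ≤ q ^ k := Nat.pow_le_pow_right (by omega) hd'
  have hp : q ^ d = q ^ d' := by
    have : q ^ k - q ^ d = q ^ k - q ^ d' := by rw [← e1, ← e2, h]
    omega
  exact Nat.pow_right_injective hq hp

end Arith

section Phi

variable {F K : Type*} [Field F] [Field K] [Algebra F K] {k : ℕ}

/-- The `F`-linear map `F^k → K` attached to `x : K^k`. -/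
def phiMap (x : Fin k → K) : (Fin k → F) →ₗ[F] K where
  toFun v := ∑ i, v i • x i
  map_add' a b := by
    simp [add_smul, Finset.sum_add_distrib]
  map_smul' c a := by
    simp only [Pi.smul_apply, smul_eq_mul, RingHom.id_apply, mul_smul, Finset.smul_sum]

lemma phiMap_single (x : Fin k → K) (i : Fin k) : phiMap (F := F) x (Pi.single i 1) = x i := by
  simp [phiMap, Pi.single_apply, ite_smul]

lemma phiMap_col (G : Matrix (Fin k) (Fin n) F) (x : Fin k → K) (c : Fin n) :
    Matrix.vecMul x (G.map (algebraMap F K)) c = phiMap x (fun r => G r c) := by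
  simp [Matrix.vecMul, dotProduct, phiMap, Algebra.smul_def, mul_comm]

/-- Bijection between `K^k` and `F`-linear maps `F^k → K`. -/
def phiEquiv : (Fin k → K) ≃ ((Fin k → F) →ₗ[F] K) where
  toFun := phiMap
  invFun ψ := fun i => ψ (Pi.single i 1)
  left_inv x := funext fun i => phiMap_single x i
  right_inv ψ := by
    apply Module.Basis.ext (Pi.basisFun F (Fin k))
    intro i
    simp only [Pi.basisFun_apply]
    rw [phiMap_single]

end Phi

set_option maxHeartbeats 1000000 in
/-- Weight enumerator of the lifted Simplex code: the number of codewords of Hamming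
weight `w` in the lifted code over `K` of the `q`-ary Simplex code is
`[k,j]_q (q^ℓ-1)⋯(q^ℓ-q^{j-1})` if `w = (q^k - q^{k-j})/(q-1)` for some `1 ≤ j ≤ k`,
and `0` otherwise. -/
theorem stmt_2 (q k n ℓ : ℕ) (hk : 1 ≤ k) (hℓ : 1 ≤ ℓ)
    (F K : Type) [Field F] [Fintype F] [Field K] [Fintype K] [DecidableEq K] [Algebra F K]
    (hF : Fintype.card F = q) (hK : Fintype.card K = q ^ ℓ)
    (hn : n = (q ^ k - 1) / (q - 1))
    (G : Matrix (Fin k) (Fin n) F)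
    (hcol : ∀ c : Fin n, (fun r => G r c) ≠ 0)
    (hlines : ∀ L : Submodule F (Fin k → F), Module.finrank F L = 1 →
        ∃! c : Fin n, (fun r => G r c) ∈ L)
    (w : ℕ) (hw : 1 ≤ w) :
    (∀ j : ℕ, 1 ≤ j → j ≤ k → w = (q ^ k - q ^ (k - j)) / (q - 1) →
        Nat.card {cw : Fin n → K //
            (∃ x : Fin k → K, Matrix.vecMul x (G.map (algebraMap F K)) = cw) ∧
              hammingNorm cw = w} =
          gbinom q k j * ∏ s ∈ Finset.range j, (q ^ ℓ - q ^ s)) ∧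
      ((¬ ∃ j : ℕ, 1 ≤ j ∧ j ≤ k ∧ w = (q ^ k - q ^ (k - j)) / (q - 1)) →
        Nat.card {cw : Fin n → K //
            (∃ x : Fin k → K, Matrix.vecMul x (G.map (algebraMap F K)) = cw) ∧
              hammingNorm cw = w} = 0) := by
  classical
  have hq2 : 2 ≤ q := hF ▸ Fintype.one_lt_card
  have hfr : finrank F K = ℓ := by
    have h := card_eq_pow_finrank (K := F) (V := K)
    rw [hK, hF] at h
    exact Nat.pow_right_injective hq2 h.symm
  have hfrk : finrank F (Fin k → F) = k := finrank_fin_fun F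
  -- the count of zero coordinates via lines
  have ecol : ∀ W : Submodule F (Fin k → F),
      {c : Fin n // (fun r => G r c) ∈ W} ≃
        {L : Submodule F (Fin k → F) // finrank F L = 1 ∧ L ≤ W} := by
    intro W
    exact
      { toFun := fun c => ⟨Submodule.span F {fun r => G r c.1},
          finrank_span_singleton (hcol c.1),
          (Submodule.span_singleton_le_iff_mem _ _).2 c.2⟩
        invFun := fun L => ⟨(hlines L.1 L.2.1).choose,
          L.2.2 (hlines L.1 L.2.1).choose_spec.1⟩
        left_inv := by
          rintro ⟨c, hc⟩
          apply Subtype.ext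
          exact ((hlines _ (finrank_span_singleton (hcol c))).choose_spec.2 c
            (Submodule.mem_span_singleton_self _)).symm
        right_inv := by
          rintro ⟨L, hL1, hL2⟩
          apply Subtype.ext
          show Submodule.span F {fun r => G r (hlines L hL1).choose} = L
          refine Submodule.eq_of_le_of_finrank_eq ?_ ?_
          · rw [Submodule.span_singleton_le_iff_mem]
            exact (hlines L hL1).choose_spec.1
          · rw [hL1, finrank_span_singleton (hcol _)] }
  -- the weight of a codeword
  have hcount : ∀ x : Fin k → K,
      hammingNorm (Matrix.vecMul x (G.map (algebraMap F K))) =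
        (q ^ k - q ^ finrank F (LinearMap.ker (phiMap (F := F) x))) / (q - 1) := by
    intro x
    set W := LinearMap.ker (phiMap (F := F) x) with hW
    have hdk : finrank F W ≤ k := by
      have := Submodule.finrank_le W
      rwa [hfrk] at this
    have hzero : (Finset.univ.filter
        (fun c => ¬ (Matrix.vecMul x (G.map (algebraMap F K)) c ≠ 0))).card =
        (q ^ finrank F W - 1) / (q - 1) := by
      have h1 : Finset.univ.filter
          (fun c => ¬ (Matrix.vecMul x (G.map (algebraMap F K)) c ≠ 0)) =
          Finset.univ.filter (fun c : Fin n => (fun r => G r c) ∈ W) := by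
        apply Finset.filter_congr
        intro c _
        rw [not_not, phiMap_col]
        exact (LinearMap.mem_ker).symm
      rw [h1]
      have h2 : (Finset.univ.filter (fun c : Fin n => (fun r => G r c) ∈ W)).card =
          Nat.card {c : Fin n // (fun r => G r c) ∈ W} := by
        rw [Nat.card_eq_fintype_card, Fintype.card_subtype]
      rw [h2, Nat.card_congr (ecol W)]
      symm
      apply Nat.div_eq_of_eq_mul_left (by omega)
      have := card_lines_le_mul (F := F) W
      rw [hF] at this
      exact this.symm
    have htot := Finset.card_filter_add_card_filter_not
      (s := (Finset.univ : Finset (Fin n)))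
      (p := fun c => Matrix.vecMul x (G.map (algebraMap F K)) c ≠ 0)
    have hcard : (Finset.univ : Finset (Fin n)).card = n := by simp
    have hham : hammingNorm (Matrix.vecMul x (G.map (algebraMap F K))) =
        (Finset.univ.filter
          (fun c => Matrix.vecMul x (G.map (algebraMap F K)) c ≠ 0)).card := rfl
    have hgeo := geo_sub (d := finrank F W) (k := k) hq2 hdk
    rw [hham]
    omega
  -- injectivity of the lift
  have hinj : Function.Injective
      (fun x : Fin k → K => Matrix.vecMul x (G.map (algebraMap F K))) := by
    intro x y h
    funext i
    have hsne : (Pi.single i (1 : F) : Fin k → F) ≠ 0 := by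
      intro hcontra
      have := congrFun hcontra i
      simp at this
    obtain ⟨c, hc⟩ := (hlines (Submodule.span F {Pi.single i 1})
      (finrank_span_singleton hsne)).exists
    obtain ⟨a, ha⟩ := Submodule.mem_span_singleton.1 hc
    have hane : a ≠ 0 := by
      rintro rfl
      exact hcol c (by rw [← ha]; simp)
    have hxc : ∀ z : Fin k → K, Matrix.vecMul z (G.map (algebraMap F K)) c = a • z i := by
      intro z
      rw [phiMap_col, ← ha, _root_.map_smul, phiMap_single]
    have h' : Matrix.vecMul x (G.map (algebraMap F K)) c =
        Matrix.vecMul y (G.map (algebraMap F K)) c := congrFun h c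
    rw [hxc, hxc] at h'
    have h2 : algebraMap F K a * x i = algebraMap F K a * y i := by
      rw [← Algebra.smul_def, ← Algebra.smul_def]
      exact h'
    exact mul_left_cancel₀ ((map_ne_zero (algebraMap F K)).2 hane) h2
  -- main bijection: codewords of weight w ↔ x's with given weight
  have main : ∀ v : ℕ, Nat.card {cw : Fin n → K //
      (∃ x : Fin k → K, Matrix.vecMul x (G.map (algebraMap F K)) = cw) ∧
        hammingNorm cw = v} =
      Nat.card {x : Fin k → K //
        hammingNorm (Matrix.vecMul x (G.map (algebraMap F K))) = v} := by
    intro v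
    apply Nat.card_congr
    exact
      { toFun := fun cw => ⟨cw.2.1.choose, by rw [cw.2.1.choose_spec]; exact cw.2.2⟩
        invFun := fun x => ⟨Matrix.vecMul x.1 (G.map (algebraMap F K)), ⟨x.1, rfl⟩, x.2⟩
        left_inv := by
          rintro ⟨cw, hex, hv⟩
          exact Subtype.ext hex.choose_spec
        right_inv := by
          rintro ⟨x, hx⟩
          apply Subtype.ext
          exact hinj (⟨Matrix.vecMul x (G.map (algebraMap F K)), ⟨x, rfl⟩,
            hx⟩ : {cw : Fin n → K //
              (∃ x : Fin k → K, Matrix.vecMul x (G.map (algebraMap F K)) = cw) ∧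
                hammingNorm cw = v}).2.1.choose_spec }
  constructor
  · -- part 1
    intro j hj1 hjk hwj
    rw [main w]
    -- x's of weight w are x's whose phi has kernel of dimension k - j
    have e2 : {x : Fin k → K //
        hammingNorm (Matrix.vecMul x (G.map (algebraMap F K))) = w} ≃
        {ψ : (Fin k → F) →ₗ[F] K // finrank F (LinearMap.ker ψ) = k - j} := by
      refine (Equiv.subtypeEquiv (phiEquiv (F := F) (K := K) (k := k)) ?_)
      intro x
      rw [hcount x, hwj]
      constructor
      · intro h
        have hdk : finrank F (LinearMap.ker (phiMap (F := F) x)) ≤ k := by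
          have := Submodule.finrank_le (LinearMap.ker (phiMap (F := F) x))
          rwa [hfrk] at this
        exact wexp_inj (d' := k - j) (k := k) hq2 hdk (by omega) h
      · intro h
        rw [show phiEquiv (F := F) (K := K) (k := k) x = phiMap x from rfl] at h
        rw [h]
    rw [Nat.card_congr e2]
    have hfinLM : Finite ((Fin k → F) →ₗ[F] K) := Finite.of_injective _ DFunLike.coe_injective
    -- decompose by kernel
    set h : {ψ : (Fin k → F) →ₗ[F] K // finrank F (LinearMap.ker ψ) = k - j} →
        {U : Submodule F (Fin k → F) // finrank F U = k - j} :=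
      fun ψ => ⟨LinearMap.ker ψ.1, ψ.2⟩ with hh
    have hfib : ∀ U : {U : Submodule F (Fin k → F) // finrank F U = k - j},
        Nat.card {ψ // h ψ = U} = ∏ s ∈ Finset.range j, (q ^ ℓ - q ^ s) := by
      rintro ⟨U, hU⟩
      have e3 : {ψ // h ψ = ⟨U, hU⟩} ≃
          {ψ : (Fin k → F) →ₗ[F] K // LinearMap.ker ψ = U} :=
        { toFun := fun ψ => ⟨ψ.1.1, congrArg Subtype.val ψ.2⟩
          invFun := fun ψ => ⟨⟨ψ.1, by rw [ψ.2]; exact hU⟩, Subtype.ext ψ.2⟩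
          left_inv := by rintro ⟨⟨ψ, h1⟩, h2⟩; rfl
          right_inv := by rintro ⟨ψ, h1⟩; rfl }
      rw [Nat.card_congr e3, card_ker_eq_linearMaps U, hfrk, hU, hfr, hF,
        show k - (k - j) = j from by omega]
    have hsig : Nat.card (Σ U : {U : Submodule F (Fin k → F) // finrank F U = k - j},
        {ψ // h ψ = U}) =
        Nat.card {U : Submodule F (Fin k → F) // finrank F U = k - j} *
          ∏ s ∈ Finset.range j, (q ^ ℓ - q ^ s) :=
      nat_card_sigma_const hfib
    rw [← Nat.card_congr (Equiv.sigmaFiberEquiv h), hsig]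
    -- count the subspaces
    congr 1
    have hcs := card_subspaces_codim_mul (F := F) (V := Fin k → F) j (by rw [hfrk]; omega)
    rw [hfrk, hF] at hcs
    have hDpos : 0 < ∏ i ∈ Finset.range j, (q ^ j - q ^ i) := by
      apply Finset.prod_pos
      intro i hi
      have : q ^ i < q ^ j := Nat.pow_lt_pow_right (by omega) (Finset.mem_range.1 hi)
      omega
    rw [gbinom, if_pos ⟨by positivity, by exact_mod_cast hjk⟩]
    simp only [Int.toNat_natCast]
    rw [← hcs, Nat.mul_div_cancel _ hDpos]
  · -- part 2
    intro hno
    have : IsEmpty {cw : Fin n → K //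
        (∃ x : Fin k → K, Matrix.vecMul x (G.map (algebraMap F K)) = cw) ∧
          hammingNorm cw = w} := by
      constructor
      rintro ⟨cw, ⟨x, rfl⟩, hwt⟩
      rw [hcount x] at hwt
      set d := finrank F (LinearMap.ker (phiMap (F := F) x)) with hd
      have hdk : d ≤ k := by
        have := Submodule.finrank_le (LinearMap.ker (phiMap (F := F) x))
        rwa [hfrk] at this
      by_cases hdeq : d = k
      · rw [hdeq] at hwt
        simp at hwt
        omega
      · refine hno ⟨k - d, by omega, by omega, ?_⟩
        rw [show k - (k - d) = d from by omega]
        exact hwt.symm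
    exact Nat.card_of_isEmpty
end

section
/- Let k ≥ 1, n = (q^k − 1)/(q − 1), and let G be a k×n matrix over F_q whose columns consist of exactly one nonzero vector from each 1-dimensional subspace of F_q^k, generating the q-ary Simplex code S_{q,k}. Then for every integer j with 1 ≤ j ≤ k: every j-dimensional subcode of S_{q,k} has support weight exactly (q^k − q^{k−j})/(q − 1); the number of j-dimensional subcodes of S_{q,k} equals [k, j]_q; and consequently the j-th generalized Hamming weight satisfies d_j(S_{q,k}) = (q^k − q^{k−j})/(q − 1). -/
open Matrix Module

section Aux
open Finset
variable {F : Type} [Field F] [Fintype F]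

lemma aux_card_submodule_mul {V : Type} [AddCommGroup V] [Module F V] [Finite V]
    (j : ℕ) (hj : j ≤ finrank F V) :
    Nat.card {W : Submodule F V // finrank F W = j} *
        ∏ i ∈ Finset.range j, (Fintype.card F ^ j - Fintype.card F ^ i)
      = ∏ i ∈ Finset.range j, (Fintype.card F ^ finrank F V - Fintype.card F ^ i) := by
  classical
  haveI : Fintype V := Fintype.ofFinite V
  haveI : Finite (Submodule F V) := Finite.of_injective _ SetLike.coe_injective
  -- the fibration
  let f : {s : Fin j → V // LinearIndependent F s} → {W : Submodule F V // finrank F W = j} :=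
    fun s => ⟨Submodule.span F (Set.range s.1), by
      rw [finrank_span_eq_card s.2, Fintype.card_fin]⟩
  have key : ∀ W : {W : Submodule F V // finrank F W = j},
      Nat.card {s // f s = W} = ∏ i ∈ Finset.range j, (Fintype.card F ^ j - Fintype.card F ^ i) := by
    intro W
    have hW : finrank F W.1 = j := W.2
    have e : {s // f s = W} ≃ {t : Fin j → W.1 // LinearIndependent F t} := by
      refine ⟨fun s => ⟨fun i => ⟨s.1.1 i, ?_⟩, ?_⟩, fun t => ⟨⟨fun i => (t.1 i : V), ?_⟩, ?_⟩, ?_, ?_⟩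
      · have := congrArg Subtype.val s.2
        simp only [f] at this
        rw [← this]
        exact Submodule.subset_span (Set.mem_range_self i)
      · apply LinearIndependent.of_comp W.1.subtype
        exact s.1.2
      · exact t.2.map' W.1.subtype (Submodule.ker_subtype W.1)
      · refine Subtype.ext ?_
        have hspan : Submodule.span F (Set.range fun i => (t.1 i : V)) = W.1 := by
          have htop : Submodule.span F (Set.range t.1) = ⊤ :=
            t.2.span_eq_top_of_card_eq_finrank' (by simp [hW])
          have : (Set.range fun i => (t.1 i : V)) = W.1.subtype '' Set.range t.1 := by
            ext x; simp [Set.range_comp]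
          rw [this, ← Submodule.map_span, htop, Submodule.map_top, Submodule.range_subtype]
        simpa [f] using hspan
      · intro s; ext i; rfl
      · intro t; ext i; rfl
    rw [Nat.card_congr e, card_linearIndependent (by rw [hW]), hW]
    exact Fin.prod_univ_eq_prod_range (fun i => Fintype.card F ^ j - Fintype.card F ^ i) j
  have hsig := Nat.card_congr (Equiv.sigmaFiberEquiv f).symm
  rw [card_linearIndependent hj,
    Fin.prod_univ_eq_prod_range (fun i => Fintype.card F ^ finrank F V - Fintype.card F ^ i)] at hsig
  haveI : Fintype {W : Submodule F V // finrank F W = j} := Fintype.ofFinite _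
  haveI : ∀ y : {W : Submodule F V // finrank F W = j}, Fintype {x // f x = y} :=
    fun y => Fintype.ofFinite _
  rw [hsig, Nat.card_eq_fintype_card, Nat.card_eq_fintype_card, Fintype.card_sigma]
  have hfib : ∀ y : {W : Submodule F V // finrank F W = j},
      Fintype.card {x // f x = y} = ∏ i ∈ Finset.range j, (Fintype.card F ^ j - Fintype.card F ^ i) := by
    intro y; rw [← Nat.card_eq_fintype_card]; exact key y
  rw [Finset.sum_congr rfl (fun y _ => hfib y), Finset.sum_const, smul_eq_mul,
    Finset.card_univ, ← Nat.card_eq_fintype_card]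

lemma aux_card_lines {V : Type} [AddCommGroup V] [Module F V] [Finite V] :
    Nat.card {L : Submodule F V // finrank F L = 1} * (Fintype.card F - 1)
      = Fintype.card F ^ finrank F V - 1 := by
  by_cases hd : 1 ≤ finrank F V
  · have := aux_card_submodule_mul (F := F) (V := V) 1 hd
    simpa using this
  · have hd0 : finrank F V = 0 := by omega
    have : IsEmpty {L : Submodule F V // finrank F L = 1} := by
      refine ⟨fun L => ?_⟩
      have h1 := L.2
      have h2 : finrank F L.1 ≤ finrank F V := Submodule.finrank_le L.1
      omega
    rw [Nat.card_of_isEmpty, hd0, pow_zero]; simp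

end Aux

open Finset in
/-- For the `q`-ary Simplex code `S_{q,k}` and `1 ≤ j ≤ k`: every `j`-dimensional subcode
has support weight `(q^k - q^{k-j})/(q-1)`; the number of `j`-dimensional subcodes is
`[k,j]_q`; and the `j`-th generalized Hamming weight is `(q^k - q^{k-j})/(q-1)`. -/
theorem stmt_3 (q k n : ℕ) (hk : 1 ≤ k)
    (F : Type) [Field F] [Fintype F] (hF : Fintype.card F = q)
    (hn : n = (q ^ k - 1) / (q - 1))
    (G : Matrix (Fin k) (Fin n) F)
    (hcol : ∀ c : Fin n, (fun r => G r c) ≠ 0)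
    (hlines : ∀ L : Submodule F (Fin k → F), Module.finrank F L = 1 →
        ∃! c : Fin n, (fun r => G r c) ∈ L)
    (j : ℕ) (hj1 : 1 ≤ j) (hjk : j ≤ k) :
    (∀ D : Submodule F (Fin n → F), D ≤ LinearMap.range G.vecMulLinear →
        Module.finrank F D = j → suppWeight D = (q ^ k - q ^ (k - j)) / (q - 1)) ∧
    Nat.card {D : Submodule F (Fin n → F) //
        D ≤ LinearMap.range G.vecMulLinear ∧ Module.finrank F D = j} = gbinom q k j ∧
    sInf {w | ∃ D : Submodule F (Fin n → F),
        D ≤ LinearMap.range G.vecMulLinear ∧ Module.finrank F D = j ∧ suppWeight D = w}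
      = (q ^ k - q ^ (k - j)) / (q - 1) := by
  classical
  subst hF
  set q := Fintype.card F with hq'
  have hq : 2 ≤ q := Fintype.one_lt_card
  set col : Fin n → (Fin k → F) := fun c r => G r c with hcoldef
  set B : LinearMap.BilinForm F (Fin k → F) := Matrix.toBilin' 1 with hBdef
  have hB : ∀ x y, B x y = x ⬝ᵥ y := fun x y => by
    rw [hBdef, Matrix.toBilin'_apply', Matrix.one_mulVec]
  have hBrefl : B.IsRefl := fun x y h => by
    rw [hB] at h ⊢; rwa [dotProduct_comm]
  have hBnd : B.Nondegenerate := by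
    rw [hBdef, Matrix.nondegenerate_toBilin'_iff]
    exact Matrix.nondegenerate_of_det_ne_zero (by simp)
  have hfr : finrank F (Fin k → F) = k := by
    simp [Module.finrank_fintype_fun_eq_card]
  have hvm : ∀ (x : Fin k → F) (c : Fin n), G.vecMulLinear x c = x ⬝ᵥ col c := fun x c => by
    simp [Matrix.vecMulLinear_apply, Matrix.vecMul, dotProduct, hcoldef]
  -- columns span everything
  have hspan : ∀ v : Fin k → F, v ∈ Submodule.span F (Set.range col) := by
    intro v
    by_cases hv : v = 0
    · simp [hv]
    · have hL : finrank F (Submodule.span F ({v} : Set (Fin k → F))) = 1 :=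
        finrank_span_singleton hv
      obtain ⟨c, hc, -⟩ := hlines _ hL
      have hc' : (col c : Fin k → F) ∈ Submodule.span F ({v} : Set (Fin k → F)) := hc
      rw [Submodule.mem_span_singleton] at hc'
      obtain ⟨a, ha⟩ := hc'
      have ha0 : a ≠ 0 := by
        rintro rfl; exact hcol c (by simpa using ha.symm)
      have : v = a⁻¹ • col c := by
        rw [← ha, smul_smul, inv_mul_cancel₀ ha0, one_smul]
      rw [this]
      exact Submodule.smul_mem _ _ (Submodule.subset_span (Set.mem_range_self c))
  -- injectivity
  have hinj : Function.Injective G.vecMulLinear := by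
    rw [← LinearMap.ker_eq_bot, eq_bot_iff]
    intro x hx
    simp only [LinearMap.mem_ker] at hx
    have hxv : ∀ y : Fin k → F, B x y = 0 := by
      intro y
      have hy := hspan y
      induction hy using Submodule.span_induction with
      | mem z hz => obtain ⟨c, rfl⟩ := hz; rw [hB, ← hvm, hx]; rfl
      | zero => simp
      | add a b _ _ ha hb => simp [ha, hb]
      | smul a z _ hz => simp [hz]
    have := hBnd.1 x (fun y => hxv y)
    simp [this]
  -- counting columns in a submodule
  have hcount : ∀ O : Submodule F (Fin k → F),
      Nat.card {c : Fin n // col c ∈ O} * (q - 1) = q ^ finrank F O - 1 := by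
    intro O
    have hbij : Function.Bijective
        (fun c : {c : Fin n // col c ∈ O} =>
          (⟨Submodule.span F {(⟨col c.1, c.2⟩ : O)}, finrank_span_singleton (by
            simp only [ne_eq, Submodule.mk_eq_zero]; exact hcol c.1)⟩ :
            {L : Submodule F O // finrank F L = 1})) := by
      constructor
      · rintro ⟨c, hc⟩ ⟨c', hc'⟩ h
        simp only [Subtype.mk_eq_mk] at h
        have h2 := congrArg (Submodule.map O.subtype) h
        rw [Submodule.map_span, Submodule.map_span] at h2
        simp only [Set.image_singleton, Submodule.coe_subtype] at h2
        have hM : finrank F (Submodule.span F ({col c} : Set (Fin k → F))) = 1 :=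
          finrank_span_singleton (hcol c)
        obtain ⟨c₀, -, huniq⟩ := hlines _ hM
        have e1 : c = c₀ := huniq c (Submodule.mem_span_singleton_self _)
        have e2 : c' = c₀ := huniq c' (by rw [h2]; exact Submodule.mem_span_singleton_self _)
        simp [e1, e2]
      · rintro ⟨L, hL⟩
        have hM : finrank F (L.map O.subtype) = 1 := by
          rw [Submodule.finrank_map_subtype_eq]; exact hL
        obtain ⟨c, hc, -⟩ := hlines _ hM
        have hcO : col c ∈ O := Submodule.map_subtype_le O L hc
        refine ⟨⟨c, hcO⟩, ?_⟩
        obtain ⟨y, hy, hyv⟩ := hc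
        have hyy : (⟨col c, hcO⟩ : O) = y := by
          apply Subtype.ext; simp only [hcoldef]; exact hyv.symm
        refine Subtype.ext ?_
        refine Submodule.eq_of_le_of_finrank_eq ?_ ?_
        · rw [Submodule.span_le, Set.singleton_subset_iff]
          rw [hyy]; exact hy
        · rw [hL]
          exact finrank_span_singleton (by
            simp only [ne_eq, Submodule.mk_eq_zero]; exact hcol c)
    rw [Nat.card_congr (Equiv.ofBijective _ hbij)]
    exact aux_card_lines
  -- PART1
  have hdvd : ∀ m : ℕ, (q - 1) ∣ q ^ m - 1 := fun m => by
    simpa using Nat.sub_dvd_pow_sub_pow q 1 m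
  obtain ⟨α, hα⟩ := hdvd k
  obtain ⟨β, hβ⟩ := hdvd (k - j)
  have hq1 : 0 < q - 1 := by omega
  have hnα : n = α := by rw [hn, hα, Nat.mul_div_cancel_left _ hq1]
  have hpowle : q ^ (k - j) ≤ q ^ k := Nat.pow_le_pow_right (by omega) (by omega)
  have hpow1 : 1 ≤ q ^ (k - j) := Nat.one_le_pow _ _ (by omega)
  have hβα : β ≤ α := by
    have : (q - 1) * β ≤ (q - 1) * α := by rw [← hα, ← hβ]; omega
    exact Nat.le_of_mul_le_mul_left this hq1
  have harith : α - β = (q ^ k - q ^ (k - j)) / (q - 1) := by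
    have h1 : q ^ k - q ^ (k - j) = (q - 1) * (α - β) := by
      rw [Nat.mul_sub, ← hα, ← hβ]; omega
    rw [h1, Nat.mul_div_cancel_left _ hq1]
  have part1 : ∀ D : Submodule F (Fin n → F), D ≤ LinearMap.range G.vecMulLinear →
      finrank F D = j → suppWeight D = (q ^ k - q ^ (k - j)) / (q - 1) := by
    intro D hD hDj
    set W := Submodule.comap G.vecMulLinear D with hWdef
    have hWD : W.map G.vecMulLinear = D := Submodule.map_comap_eq_self hD
    have hWj : finrank F W = j := by
      have h := (Submodule.equivMapOfInjective _ hinj W).finrank_eq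
      rw [hWD] at h; rw [h, hDj]
    set O := B.orthogonal W with hOdef
    have hOr : finrank F O = k - j := by
      rw [hOdef, LinearMap.BilinForm.finrank_orthogonal hBnd, hfr, hWj]
    have hchar : ∀ c : Fin n, (¬ ∃ v ∈ D, v c ≠ 0) ↔ col c ∈ O := by
      intro c
      rw [hOdef, LinearMap.BilinForm.mem_orthogonal_iff]
      constructor
      · intro h x hx
        have hxD : G.vecMulLinear x ∈ D := by rw [← hWD]; exact Submodule.mem_map_of_mem hx
        have := h
        push_neg at this
        have h0 := this (G.vecMulLinear x) hxD
        rw [hB, ← hvm, h0]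
      · intro h
        rintro ⟨v, hv, hvc⟩
        rw [← hWD] at hv
        obtain ⟨x, hx, rfl⟩ := hv
        have := h x hx
        rw [hB, ← hvm] at this
        exact hvc this
    have hsw : suppWeight D = n - Nat.card {c : Fin n // col c ∈ O} := by
      rw [suppWeight]
      have e : {idx : Fin n // ∃ c ∈ D, c idx ≠ 0} ≃ {c : Fin n // ¬ col c ∈ O} :=
        Equiv.subtypeEquivRight (fun c => by rw [← hchar c]; exact not_not.symm)
      rw [Nat.card_congr e, Nat.card_eq_fintype_card, Nat.card_eq_fintype_card,
        Fintype.card_subtype_compl, Fintype.card_fin]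
    have hcnt := hcount O
    rw [hOr, hβ] at hcnt
    have hcard : Nat.card {c : Fin n // col c ∈ O} = β :=
      Nat.eq_of_mul_eq_mul_right hq1 (by rw [hcnt, Nat.mul_comm])
    rw [hsw, hcard, hnα, harith]
  -- shared counting facts
  have hmul := aux_card_submodule_mul (F := F) (V := Fin k → F) j (by rw [hfr]; exact hjk)
  rw [hfr] at hmul
  have hDj_pos : 0 < ∏ i ∈ Finset.range j, (q ^ j - q ^ i) :=
    Finset.prod_pos (fun i hi => Nat.sub_pos_of_lt
      (Nat.pow_lt_pow_right (by omega) (Finset.mem_range.mp hi)))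
  have hDk_pos : 0 < ∏ i ∈ Finset.range j, (q ^ k - q ^ i) :=
    Finset.prod_pos (fun i hi => Nat.sub_pos_of_lt
      (Nat.pow_lt_pow_right (by omega) (lt_of_lt_of_le (Finset.mem_range.mp hi) hjk)))
  have hfrmap : ∀ W : Submodule F (Fin k → F),
      finrank F (Submodule.map G.vecMulLinear W) = finrank F W :=
    fun W => ((Submodule.equivMapOfInjective _ hinj W).finrank_eq).symm
  refine ⟨part1, ?_, ?_⟩
  · have e2 : {D : Submodule F (Fin n → F) //
        D ≤ LinearMap.range G.vecMulLinear ∧ finrank F D = j} ≃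
        {W : Submodule F (Fin k → F) // finrank F W = j} := by
      refine ⟨fun D => ⟨Submodule.comap G.vecMulLinear D.1, ?_⟩,
        fun W => ⟨Submodule.map G.vecMulLinear W.1, LinearMap.map_le_range, by
          rw [hfrmap, W.2]⟩, ?_, ?_⟩
      · have hWD := Submodule.map_comap_eq_self D.2.1
        have h := hfrmap (Submodule.comap G.vecMulLinear D.1)
        rw [hWD] at h; rw [← h, D.2.2]
      · intro D; exact Subtype.ext (Submodule.map_comap_eq_self D.2.1)
      · intro W; exact Subtype.ext (Submodule.comap_map_eq_of_injective hinj W.1)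
    rw [Nat.card_congr e2]
    have hgb : gbinom q k j = (∏ i ∈ Finset.range j, (q ^ k - q ^ i)) /
        (∏ i ∈ Finset.range j, (q ^ j - q ^ i)) := by
      unfold gbinom
      rw [if_pos ⟨Int.ofNat_nonneg j, by exact_mod_cast hjk⟩]
      simp
    rw [hgb]
    exact (Nat.div_eq_of_eq_mul_left hDj_pos hmul.symm).symm
  · have hpos : 0 < Nat.card {W : Submodule F (Fin k → F) // finrank F W = j} := by
      refine Nat.pos_of_ne_zero (fun h0 => ?_)
      rw [h0, zero_mul] at hmul
      exact absurd hmul.symm (Nat.pos_iff_ne_zero.mp hDk_pos)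
    obtain ⟨⟨W, hWj2⟩⟩ := (Nat.card_pos_iff.mp hpos).1
    have hsets : {w | ∃ D : Submodule F (Fin n → F),
        D ≤ LinearMap.range G.vecMulLinear ∧ finrank F D = j ∧ suppWeight D = w}
        = {(q ^ k - q ^ (k - j)) / (q - 1)} := by
      ext w
      simp only [Set.mem_setOf_eq, Set.mem_singleton_iff]
      constructor
      · rintro ⟨D, h1, h2, rfl⟩; exact part1 D h1 h2
      · rintro rfl
        refine ⟨Submodule.map G.vecMulLinear W, LinearMap.map_le_range, ?_, ?_⟩
        · rw [hfrmap, hWj2]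
        · exact part1 _ LinearMap.map_le_range (by rw [hfrmap, hWj2])
    rw [hsets]
    exact csInf_singleton _
end

section
/- For all integers j, i with 1 ≤ j ≤ k and 0 ≤ i ≤ n, the number of j-dimensional subcodes of C with support weight i equals q^{(u−t)(k−j−t)} · [k−u, k−j−t]_q · [u, t]_q if n − i = q^{k−j} − q^t for some integer t with max(0, u−j) ≤ t ≤ u, and equals 0 if no such t exists. -/
open Matrix Module

open Submodule

set_option linter.unusedSectionVars false
set_option linter.unusedVariables false


lemma card_eq_card_mul_of_fiber {A B : Type*} [Finite A] [Finite B] (Φ : A → B) (c : ℕ)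
    (h : ∀ b, Nat.card {a // Φ a = b} = c) : Nat.card A = Nat.card B * c := by
  classical
  have := Fintype.ofFinite A
  have := Fintype.ofFinite B
  rw [← Nat.card_congr (Equiv.sigmaFiberEquiv Φ), Nat.card_eq_fintype_card,
    Fintype.card_sigma]
  simp only [← Nat.card_eq_fintype_card, h]
  rw [Finset.sum_const, Nat.card_eq_fintype_card, smul_eq_mul, Finset.card_univ]


section GeneralCounting

variable {F V : Type*} [Field F] [Fintype F] [AddCommGroup V] [Module F V] [Finite V]

local notation "q" => Fintype.card F

/-- Fiber description for the span map. -/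
noncomputable def spanFiberEquiv (m : ℕ) (W : Submodule F V) (hW : finrank F W = m) :
    {s : {s : Fin m → V // LinearIndependent F s} //
        Submodule.span F (Set.range s.1) = W} ≃ {g : Fin m → W // LinearIndependent F g} where
  toFun s := ⟨fun i => ⟨s.1.1 i, by
      exact (le_of_eq s.2) (Submodule.subset_span (Set.mem_range_self i))⟩, by
    apply LinearIndependent.of_comp W.subtype
    exact s.1.2⟩
  invFun g := by
    have hind : LinearIndependent F (fun i => ((g.1 i : V))) :=
      g.2.map' W.subtype (Submodule.ker_subtype W)
    refine ⟨⟨fun i => (g.1 i : V), hind⟩, ?_⟩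
    have hle : Submodule.span F (Set.range fun i => ((g.1 i : V))) ≤ W := by
      rw [Submodule.span_le]; rintro - ⟨i, rfl⟩; exact (g.1 i).2
    have hfr : finrank F (Submodule.span F (Set.range fun i => ((g.1 i : V)))) = m := by
      rw [finrank_span_eq_card hind]; simp
    exact Submodule.eq_of_le_of_finrank_le hle (by rw [hW, hfr])
  left_inv s := by ext i; rfl
  right_inv g := by ext i; rfl

lemma card_grassmannian_mul (m : ℕ) (hm : m ≤ finrank F V) :
    Nat.card {W : Submodule F V // finrank F W = m} *
      ∏ i ∈ Finset.range m, (q ^ m - q ^ i) =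
      ∏ i ∈ Finset.range m, (q ^ finrank F V - q ^ i) := by
  have key := card_linearIndependent (K := F) (V := V) hm
  rw [Fin.prod_univ_eq_prod_range (fun i => q ^ finrank F V - q ^ i) m] at key
  rw [← key]
  have hsp : ∀ s : {s : Fin m → V // LinearIndependent F s},
      finrank F (Submodule.span F (Set.range s.1)) = m := by
    intro s; rw [finrank_span_eq_card s.2]; simp
  rw [card_eq_card_mul_of_fiber
    (fun s : {s : Fin m → V // LinearIndependent F s} =>
      (⟨Submodule.span F (Set.range s.1), hsp s⟩ :
        {W : Submodule F V // finrank F W = m}))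
    (∏ i ∈ Finset.range m, (q ^ m - q ^ i))]
  intro W
  have e1 : {s : {s : Fin m → V // LinearIndependent F s} //
      (⟨Submodule.span F (Set.range s.1), hsp s⟩ :
        {W : Submodule F V // finrank F W = m}) = W} ≃
      {g : Fin m → W.1 // LinearIndependent F g} :=
    (Equiv.subtypeEquivRight (fun s => by
      rw [Subtype.ext_iff])).trans (spanFiberEquiv m W.1 W.2)
  rw [Nat.card_congr e1, card_linearIndependent (by rw [W.2] : m ≤ finrank F W.1), W.2]
  exact Fin.prod_univ_eq_prod_range (fun i => q ^ m - q ^ i) m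


lemma prod_sub_pow_pos (m : ℕ) (hq : 2 ≤ q) :
    0 < ∏ i ∈ Finset.range m, (q ^ m - q ^ i) := by
  apply Finset.prod_pos
  intro i hi
  have : q ^ i < q ^ m := Nat.pow_lt_pow_right hq (Finset.mem_range.mp hi)
  omega

/-- `gbinom` times denominator = numerator. -/
lemma gbinom_mul_eq (a b : ℕ) (hba : b ≤ a) (hq : 2 ≤ q) :
    gbinom q a b * ∏ i ∈ Finset.range b, (q ^ b - q ^ i) =
      ∏ i ∈ Finset.range b, (q ^ a - q ^ i) := by
  have key := card_grassmannian_mul (F := F) (V := Fin a → F) b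
    (by simpa [Module.finrank_fintype_fun_eq_card] using hba)
  rw [Module.finrank_fintype_fun_eq_card, Fintype.card_fin] at key
  have hdvd : (∏ i ∈ Finset.range b, (q ^ b - q ^ i)) ∣
      ∏ i ∈ Finset.range b, (q ^ a - q ^ i) := ⟨_, by rw [← key]; ring⟩
  rw [gbinom, if_pos ⟨Int.ofNat_nonneg b, by exact_mod_cast hba⟩]
  simp only [Int.toNat_natCast]
  exact Nat.div_mul_cancel hdvd

/-- Also: `gbinom` is the number of subspaces. -/
lemma gbinom_eq_card (b : ℕ) (hq : 2 ≤ q) (hb : b ≤ finrank F V) :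
    gbinom q (finrank F V) b = Nat.card {W : Submodule F V // finrank F W = b} := by
  have h1 := gbinom_mul_eq (F := F) (finrank F V) b hb hq
  have h2 := card_grassmannian_mul (F := F) (V := V) b hb
  have hpos := prod_sub_pow_pos (F := F) b hq
  exact Nat.eq_of_mul_eq_mul_right hpos (h1.trans h2.symm)

/-- Counting tuples whose image under `φ` is linearly independent. -/
lemma card_comp_linearIndependent' {V' : Type*} [AddCommGroup V'] [Module F V'] [Finite V']
    (φ : V →ₗ[F] V') (r : ℕ) (hr : r ≤ finrank F (LinearMap.range φ)) :
    Nat.card {h : Fin r → V // LinearIndependent F (φ ∘ h)} =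
      Nat.card (LinearMap.ker φ) ^ r *
        ∏ i ∈ Finset.range r, (q ^ finrank F (LinearMap.range φ) - q ^ i) := by
  classical
  -- replace φ by its range restriction
  have hiff : ∀ h : Fin r → V, LinearIndependent F (φ ∘ h) ↔
      LinearIndependent F (φ.rangeRestrict ∘ h) := by
    intro h
    constructor
    · intro hh
      apply LinearIndependent.of_comp (LinearMap.range φ).subtype
      exact hh
    · intro hh
      have := hh.map' (LinearMap.range φ).subtype (Submodule.ker_subtype _)
      exact this
  obtain ⟨σ, hσ⟩ := (φ.rangeRestrict).exists_rightInverse_of_surjective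
    (LinearMap.range_rangeRestrict φ)
  have hσ' : ∀ y, φ.rangeRestrict (σ y) = y := fun y => LinearMap.congr_fun hσ y
  have hφσ : ∀ y, φ (σ y) = (y : V') := fun y => congrArg Subtype.val (hσ' y)
  have e : {h : Fin r → V // LinearIndependent F (φ.rangeRestrict ∘ h)} ≃
      {g : Fin r → LinearMap.range φ // LinearIndependent F g} ×
        (Fin r → LinearMap.ker φ.rangeRestrict) :=
    { toFun := fun h => (⟨φ.rangeRestrict ∘ h.1, h.2⟩,
        fun i => ⟨h.1 i - σ (φ.rangeRestrict (h.1 i)), by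
          simp [LinearMap.mem_ker, map_sub, hσ', hφσ]⟩)
      invFun := fun p => ⟨fun i => σ (p.1.1 i) + (p.2 i).1, by
        have : (φ.rangeRestrict ∘ fun i => σ (p.1.1 i) + (p.2 i).1) = p.1.1 := by
          funext i
          have hk := (p.2 i).2
          rw [LinearMap.mem_ker] at hk
          simp [hσ', hk]
        rw [this]; exact p.1.2⟩
      left_inv := fun h => by
        ext i
        simp
      right_inv := fun p => by
        refine Prod.ext (Subtype.ext (funext fun i => ?_)) (funext fun i => Subtype.ext ?_)
        · have hk := (p.2 i).2
          rw [LinearMap.mem_ker] at hk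
          simp [hσ', hk]
        · have hk := (p.2 i).2
          rw [LinearMap.mem_ker] at hk
          simp [hσ', hk] }
  rw [Nat.card_congr ((Equiv.subtypeEquivRight hiff).trans e), Nat.card_prod,
    LinearMap.ker_rangeRestrict,
    Nat.card_fun, Nat.card_eq_fintype_card (α := Fin r), Fintype.card_fin,
    card_linearIndependent hr, Fin.prod_univ_eq_prod_range
      (fun i => q ^ finrank F (LinearMap.range φ) - q ^ i) r]
  ring


lemma span_pair_facts (S : Submodule F V) {t r : ℕ} (g : Fin t → V) (h : Fin r → V)
    (hgS : ∀ i, g i ∈ S) (hg : LinearIndependent F g)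
    (hh : LinearIndependent F (S.mkQ ∘ h)) :
    finrank F (span F (Set.range g) ⊔ span F (Set.range h) : Submodule F V) = t + r ∧
      (span F (Set.range g) ⊔ span F (Set.range h)) ⊓ S = span F (Set.range g) := by
  have hgle : span F (Set.range g) ≤ S := by
    rw [span_le]; rintro - ⟨i, rfl⟩; exact hgS i
  have hh' : LinearIndependent F h := LinearIndependent.of_comp S.mkQ hh
  have hPhS : ∀ x ∈ span F (Set.range h), x ∈ S → x = 0 := by
    intro x hx hxS
    rw [mem_span_range_iff_exists_fun] at hx
    obtain ⟨c, rfl⟩ := hx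
    have h0 : ∑ i, c i • (S.mkQ ∘ h) i = 0 := by
      have heq : ∑ i, c i • (S.mkQ ∘ h) i = S.mkQ (∑ i, c i • h i) := by
        simp [Function.comp_apply, _root_.map_sum, _root_.map_smul]
      rw [heq, Submodule.mkQ_apply, Submodule.Quotient.mk_eq_zero]
      exact hxS
    have hc := Fintype.linearIndependent_iff.mp hh c h0
    simp [hc]
  have hdisj : Disjoint (span F (Set.range g)) (span F (Set.range h)) := by
    rw [Submodule.disjoint_def]
    intro x hxg hxh
    exact hPhS x hxh (hgle hxg)
  have c1 : LinearIndependent F (Sum.elim g h) := hg.sum_type hh' hdisj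
  constructor
  · have : span F (Set.range (Sum.elim g h)) =
        span F (Set.range g) ⊔ span F (Set.range h) := by
      rw [Set.Sum.elim_range, Submodule.span_union]
    rw [← this, finrank_span_eq_card c1]
    simp
  · refine le_antisymm ?_ (le_inf le_sup_left hgle)
    rintro x hx
    rw [Submodule.mem_inf] at hx
    obtain ⟨hxW, hxS⟩ := hx
    rw [Submodule.mem_sup] at hxW
    obtain ⟨a, ha, b, hb, rfl⟩ := hxW
    have hbS : b ∈ S := by
      have : a ∈ S := hgle ha
      have := S.sub_mem hxS this
      simpa using this
    have : b = 0 := hPhS b hb hbS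
    simp [this, ha]
lemma nat_card_eq_pow_finrank' {X : Type*} [AddCommGroup X] [Module F X] [Finite X] :
    Nat.card X = q ^ finrank F X := by
  have := Fintype.ofFinite X
  rw [Nat.card_eq_fintype_card, card_eq_pow_finrank (K := F)]

instance inst_s7 : Finite (Submodule F V) :=
  Finite.of_injective (fun W => (W : Set V)) SetLike.coe_injective

instance (S : Submodule F V) : Finite (V ⧸ S) := Quotient.finite _

lemma card_inter_dim_mul (S : Submodule F V) (t m : ℕ) (ht : t ≤ finrank F S)
    (htm : t ≤ m) (hrq : m - t ≤ finrank F V - finrank F S) :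
    Nat.card {W : Submodule F V // finrank F W = m ∧ finrank F ↥(W ⊓ S) = t} *
      ((∏ i ∈ Finset.range t, (q ^ t - q ^ i)) * ((q ^ t) ^ (m - t) *
        ∏ i ∈ Finset.range (m - t), (q ^ (m - t) - q ^ i))) =
    (∏ i ∈ Finset.range t, (q ^ finrank F S - q ^ i)) * ((q ^ finrank F S) ^ (m - t) *
        ∏ i ∈ Finset.range (m - t), (q ^ (finrank F V - finrank F S) - q ^ i)) := by
  classical
  have hA1 : Nat.card {p : (Fin t → V) × (Fin (m - t) → V) //
      ((∀ i, p.1 i ∈ S) ∧ LinearIndependent F p.1) ∧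
        LinearIndependent F (S.mkQ ∘ p.2)} =
      (∏ i ∈ Finset.range t, (q ^ finrank F S - q ^ i)) *
        ((q ^ finrank F S) ^ (m - t) *
          ∏ i ∈ Finset.range (m - t), (q ^ (finrank F V - finrank F S) - q ^ i)) := by
    have eS : {g : Fin t → V // (∀ i, g i ∈ S) ∧ LinearIndependent F g} ≃
        {g : Fin t → (↥S) // LinearIndependent F g} :=
      { toFun := fun g => ⟨fun i => ⟨g.1 i, g.2.1 i⟩, by
          apply LinearIndependent.of_comp S.subtype
          exact g.2.2⟩
        invFun := fun g => ⟨fun i => (g.1 i : V),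
          ⟨fun i => (g.1 i).2, g.2.map' S.subtype (Submodule.ker_subtype S)⟩⟩
        left_inv := fun g => by ext i; rfl
        right_inv := fun g => by ext i; rfl }
    have hrange_mkQ : finrank F (LinearMap.range S.mkQ) = finrank F V - finrank F S := by
      rw [Submodule.range_mkQ, finrank_top]
      have := Submodule.finrank_quotient_add_finrank S
      omega
    have eProd : {p : (Fin t → V) × (Fin (m - t) → V) //
        ((∀ i, p.1 i ∈ S) ∧ LinearIndependent F p.1) ∧
          LinearIndependent F (S.mkQ ∘ p.2)} ≃
        {g : Fin t → V // (∀ i, g i ∈ S) ∧ LinearIndependent F g} ×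
          {h : Fin (m - t) → V // LinearIndependent F (S.mkQ ∘ h)} :=
      { toFun := fun p => (⟨p.1.1, p.2.1⟩, ⟨p.1.2, p.2.2⟩)
        invFun := fun gh => ⟨(gh.1.1, gh.2.1), gh.1.2, gh.2.2⟩
        left_inv := fun p => rfl
        right_inv := fun gh => rfl }
    rw [Nat.card_congr eProd, Nat.card_prod]
    congr 1
    · rw [Nat.card_congr eS, card_linearIndependent ht]
      exact Fin.prod_univ_eq_prod_range (fun i => q ^ finrank F S - q ^ i) t
    · rw [card_comp_linearIndependent' S.mkQ (m - t) (by rw [hrange_mkQ]; exact hrq),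
        hrange_mkQ, Submodule.ker_mkQ, nat_card_eq_pow_finrank' (F := F) (X := ↥S)]
  have keyfacts : ∀ p : {p : (Fin t → V) × (Fin (m - t) → V) //
      ((∀ i, p.1 i ∈ S) ∧ LinearIndependent F p.1) ∧
        LinearIndependent F (S.mkQ ∘ p.2)},
      finrank F (span F (Set.range p.1.1) ⊔ span F (Set.range p.1.2) : Submodule F V) = m ∧
        finrank F ↥((span F (Set.range p.1.1) ⊔ span F (Set.range p.1.2)) ⊓ S) = t := by
    intro p
    obtain ⟨⟨hgS, hg⟩, hh⟩ := p.2
    obtain ⟨h1, h2⟩ := span_pair_facts S p.1.1 p.1.2 hgS hg hh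
    refine ⟨by rw [h1]; omega, by rw [h2, finrank_span_eq_card hg]; simp⟩
  have hfib : ∀ W : {W : Submodule F V // finrank F W = m ∧ finrank F ↥(W ⊓ S) = t},
      Nat.card {p : {p : (Fin t → V) × (Fin (m - t) → V) //
          ((∀ i, p.1 i ∈ S) ∧ LinearIndependent F p.1) ∧
            LinearIndependent F (S.mkQ ∘ p.2)} //
          (⟨span F (Set.range p.1.1) ⊔ span F (Set.range p.1.2), keyfacts p⟩ :
            {W : Submodule F V // finrank F W = m ∧ finrank F ↥(W ⊓ S) = t}) = W} =
      (∏ i ∈ Finset.range t, (q ^ t - q ^ i)) * ((q ^ t) ^ (m - t) *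
          ∏ i ∈ Finset.range (m - t), (q ^ (m - t) - q ^ i)) := by
    intro W
    have hker : LinearMap.ker (S.mkQ ∘ₗ W.1.subtype) = Submodule.comap W.1.subtype S := by
      rw [LinearMap.ker_comp, Submodule.ker_mkQ]
    have hkerfr : finrank F (LinearMap.ker (S.mkQ ∘ₗ W.1.subtype)) = t := by
      rw [hker]
      have e := Submodule.equivMapOfInjective W.1.subtype
        (Submodule.injective_subtype W.1) (Submodule.comap W.1.subtype S)
      rw [e.finrank_eq, Submodule.map_comap_subtype]
      exact W.2.2
    have hrange : finrank F (LinearMap.range (S.mkQ ∘ₗ W.1.subtype)) = m - t := by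
      have h1 := LinearMap.finrank_range_add_finrank_ker (S.mkQ ∘ₗ W.1.subtype)
      rw [hkerfr] at h1
      have h2 : finrank F W.1 = m := W.2.1
      rw [h2] at h1
      omega
    have efib : {p : {p : (Fin t → V) × (Fin (m - t) → V) //
          ((∀ i, p.1 i ∈ S) ∧ LinearIndependent F p.1) ∧
            LinearIndependent F (S.mkQ ∘ p.2)} //
          (⟨span F (Set.range p.1.1) ⊔ span F (Set.range p.1.2), keyfacts p⟩ :
            {W : Submodule F V // finrank F W = m ∧ finrank F ↥(W ⊓ S) = t}) = W} ≃
        {g : Fin t → (↥(W.1 ⊓ S)) // LinearIndependent F g} ×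
          {h : Fin (m - t) → (↥W.1) //
            LinearIndependent F ((S.mkQ ∘ₗ W.1.subtype) ∘ h)} :=
      { toFun := fun p => by
          have hW : span F (Set.range p.1.1.1) ⊔ span F (Set.range p.1.1.2) = W.1 :=
            congrArg Subtype.val p.2
          exact
          (⟨fun i => ⟨p.1.1.1 i, by
              refine Submodule.mem_inf.mpr ⟨?_, p.1.2.1.1 i⟩
              rw [← hW]
              exact Submodule.mem_sup_left (Submodule.subset_span (Set.mem_range_self i))⟩, by
            apply LinearIndependent.of_comp (W.1 ⊓ S).subtype
            exact p.1.2.1.2⟩,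
          ⟨fun i => ⟨p.1.1.2 i, by
              rw [← hW]
              exact Submodule.mem_sup_right (Submodule.subset_span (Set.mem_range_self i))⟩, by
            exact p.1.2.2⟩)
        invFun := fun gh => ⟨⟨(fun i => (gh.1.1 i : V), fun i => (gh.2.1 i : V)),
            ⟨⟨fun i => (Submodule.mem_inf.mp (gh.1.1 i).2).2,
              gh.1.2.map' (W.1 ⊓ S).subtype (Submodule.ker_subtype _)⟩, by
              exact gh.2.2⟩⟩, by
          have hgS' : ∀ i, ((gh.1.1 i : V)) ∈ S :=
            fun i => (Submodule.mem_inf.mp (gh.1.1 i).2).2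
          have hg' : LinearIndependent F (fun i => ((gh.1.1 i : V))) :=
            gh.1.2.map' (W.1 ⊓ S).subtype (Submodule.ker_subtype _)
          have hh' : LinearIndependent F (S.mkQ ∘ fun i => ((gh.2.1 i : V))) := gh.2.2
          have hle : span F (Set.range fun i => ((gh.1.1 i : V))) ⊔
              span F (Set.range fun i => ((gh.2.1 i : V))) ≤ W.1 := by
            refine sup_le (Submodule.span_le.mpr ?_) (Submodule.span_le.mpr ?_)
            · rintro - ⟨i, rfl⟩; exact (Submodule.mem_inf.mp (gh.1.1 i).2).1
            · rintro - ⟨i, rfl⟩; exact (gh.2.1 i).2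
          have hfr := (span_pair_facts S _ _ hgS' hg' hh').1
          apply Subtype.ext
          exact Submodule.eq_of_le_of_finrank_le hle (by rw [hfr, W.2.1]; omega)⟩
        left_inv := fun p => by
          apply Subtype.ext; apply Subtype.ext
          exact Prod.ext rfl rfl
        right_inv := fun gh => by
          refine Prod.ext (Subtype.ext ?_) (Subtype.ext ?_) <;> funext i <;> rfl }
    rw [Nat.card_congr efib, Nat.card_prod,
      card_linearIndependent (le_of_eq W.2.2.symm),
      card_comp_linearIndependent' (S.mkQ ∘ₗ W.1.subtype) (m - t) (le_of_eq hrange.symm),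
      hrange, nat_card_eq_pow_finrank' (F := F) (X := ↥(LinearMap.ker (S.mkQ ∘ₗ W.1.subtype))),
      hkerfr, W.2.2]
    congr 1
    exact Fin.prod_univ_eq_prod_range (fun i => q ^ t - q ^ i) t
  have hA2 := card_eq_card_mul_of_fiber
    (fun p : {p : (Fin t → V) × (Fin (m - t) → V) //
        ((∀ i, p.1 i ∈ S) ∧ LinearIndependent F p.1) ∧
          LinearIndependent F (S.mkQ ∘ p.2)} =>
      (⟨span F (Set.range p.1.1) ⊔ span F (Set.range p.1.2), keyfacts p⟩ :
        {W : Submodule F V // finrank F W = m ∧ finrank F ↥(W ⊓ S) = t}))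
    _ hfib
  rw [← hA2, hA1]

end GeneralCounting


section Ortho

variable {F : Type} [Field F] [Fintype F] {k : ℕ}

/-- Orthogonal complement w.r.t. the dot product. -/
def orthoDot (V : Submodule F (Fin k → F)) : Submodule F (Fin k → F) where
  carrier := {w | ∀ v ∈ V, v ⬝ᵥ w = 0}
  add_mem' := fun {a b} ha hb v hv => by rw [dotProduct_add, ha v hv, hb v hv, add_zero]
  zero_mem' := fun v _ => dotProduct_zero v
  smul_mem' := fun c w hw v hv => by rw [dotProduct_smul, hw v hv, smul_zero]

lemma mem_orthoDot {V : Submodule F (Fin k → F)} {w : Fin k → F} :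
    w ∈ orthoDot V ↔ ∀ v ∈ V, v ⬝ᵥ w = 0 := Iff.rfl

/-- Dot product as a map to the dual. -/
def toDualDot : (Fin k → F) →ₗ[F] Module.Dual F (Fin k → F) where
  toFun w :=
    { toFun := fun v => v ⬝ᵥ w
      map_add' := fun a b => add_dotProduct a b w
      map_smul' := fun c a => smul_dotProduct c a w }
  map_add' a b := by ext v; simp [dotProduct_add]
  map_smul' c a := by ext v; simp [dotProduct_smul]

lemma toDualDot_injective : Function.Injective (toDualDot (F := F) (k := k)) := by
  rw [← LinearMap.ker_eq_bot]
  rw [Submodule.eq_bot_iff]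
  intro w hw
  rw [LinearMap.mem_ker] at hw
  funext i
  have := LinearMap.congr_fun hw (Pi.single i 1)
  simpa [toDualDot, single_dotProduct] using this

lemma toDualDot_surjective : Function.Surjective (toDualDot (F := F) (k := k)) := by
  have h := LinearMap.injective_iff_surjective_of_finrank_eq_finrank
    (f := toDualDot (F := F) (k := k)) (by rw [Subspace.dual_finrank_eq])
  exact h.mp toDualDot_injective

lemma finrank_orthoDot (V : Submodule F (Fin k → F)) :
    finrank F (orthoDot V) = k - finrank F V := by
  have hψsurj : Function.Surjective (V.dualRestrict.comp toDualDot) :=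
    (Subspace.dualRestrict_surjective (W := V)).comp toDualDot_surjective
  have hker : LinearMap.ker (V.dualRestrict.comp toDualDot) = orthoDot V := by
    ext w
    simp only [LinearMap.mem_ker, mem_orthoDot]
    constructor
    · intro h v hv
      have := LinearMap.congr_fun h ⟨v, hv⟩
      simpa [toDualDot, Submodule.dualRestrict_apply] using this
    · intro h
      ext v
      simpa [toDualDot, Submodule.dualRestrict_apply] using h v v.2
  have h1 := LinearMap.finrank_range_add_finrank_ker (V.dualRestrict.comp toDualDot)
  rw [hker, LinearMap.range_eq_top.mpr hψsurj, finrank_top] at h1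
  have h2 : finrank F (Module.Dual F V) = finrank F V := Subspace.dual_finrank_eq
  have h3 : finrank F (Fin k → F) = k := by
    rw [Module.finrank_fintype_fun_eq_card, Fintype.card_fin]
  have h4 : finrank F V ≤ k := by have h := V.finrank_le; rw [h3] at h; exact h
  omega

lemma le_orthoDot_orthoDot (V : Submodule F (Fin k → F)) :
    V ≤ orthoDot (orthoDot V) := by
  intro v hv w hw
  rw [dotProduct_comm]
  exact hw v hv

lemma orthoDot_orthoDot (V : Submodule F (Fin k → F)) :
    orthoDot (orthoDot V) = V := by
  have h3 : finrank F (Fin k → F) = k := by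
    rw [Module.finrank_fintype_fun_eq_card, Fintype.card_fin]
  have h4 : finrank F V ≤ k := by have h := V.finrank_le; rw [h3] at h; exact h
  have h5 : finrank F (orthoDot V) ≤ k := by
    have h := (orthoDot V).finrank_le; rw [h3] at h; exact h
  refine (Submodule.eq_of_le_of_finrank_le (le_orthoDot_orthoDot V) ?_).symm
  rw [finrank_orthoDot, finrank_orthoDot]
  omega


end Ortho


section
variable {F : Type} [Field F] [Fintype F] {q k n : ℕ}
  (hF : Fintype.card F = q)
  (S : Submodule F (Fin k → F))
  (G : Matrix (Fin k) (Fin n) F)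
  (hinj : Function.Injective fun c : Fin n => (fun r => G r c))
  (hran : Set.range (fun c : Fin n => (fun r => G r c)) = (S : Set (Fin k → F))ᶜ)

local notation "E" => Fin k → F

include hinj hran in
lemma card_col_mem (O : Submodule F E) :
    Nat.card {idx : Fin n // (fun r => G r idx) ∈ O} =
      Nat.card {z : E // z ∈ O ∧ z ∉ S} := by
  have hmem : ∀ idx : Fin n, ¬ ((fun r => G r idx) ∈ S) := by
    intro idx
    have : (fun r => G r idx) ∈ (S : Set E)ᶜ := by
      rw [← hran]; exact Set.mem_range_self idx
    simpa using this
  have hbij : Function.Bijective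
      (fun idx : Fin n => (⟨fun r => G r idx, hmem idx⟩ : {z : E // ¬ z ∈ S})) := by
    constructor
    · intro a b hab
      exact hinj (congrArg Subtype.val hab)
    · rintro ⟨z, hz⟩
      have : z ∈ Set.range (fun c : Fin n => (fun r => G r c)) := by
        rw [hran]; simpa using hz
      obtain ⟨idx, hidx⟩ := this
      exact ⟨idx, Subtype.ext hidx⟩
  rw [Nat.card_congr ((((Equiv.ofBijective _ hbij).subtypeEquiv
    (p := fun idx : Fin n => (fun r => G r idx) ∈ O)
    (q := fun y : {z : E // ¬ z ∈ S} => (y : E) ∈ O) (fun idx => Iff.rfl)).trans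
    (Equiv.subtypeSubtypeEquivSubtypeInter _ _)).trans
    (Equiv.subtypeEquivRight (fun z => and_comm)))]

lemma card_mem_not_mem (O : Submodule F E) :
    Nat.card {z : E // z ∈ O ∧ z ∉ S} =
      Fintype.card F ^ finrank F O - Fintype.card F ^ finrank F ↥(O ⊓ S) := by
  classical
  have e4 : {z : E // z ∈ O ∧ z ∉ S} ≃ {y : ↥O // ¬ ((y : E) ∈ S)} :=
    { toFun := fun z => ⟨⟨z.1, z.2.1⟩, z.2.2⟩
      invFun := fun y => ⟨y.1.1, y.1.2, y.2⟩
      left_inv := fun z => rfl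
      right_inv := fun y => rfl }
  have e5 : {y : ↥O // ((y : E) ∈ S)} ≃ ↥(O ⊓ S) :=
    { toFun := fun y => ⟨y.1.1, Submodule.mem_inf.mpr ⟨y.1.2, y.2⟩⟩
      invFun := fun z => ⟨⟨z.1, (Submodule.mem_inf.mp z.2).1⟩, (Submodule.mem_inf.mp z.2).2⟩
      left_inv := fun y => rfl
      right_inv := fun z => rfl }
  rw [Nat.card_congr e4, Nat.card_eq_fintype_card, Fintype.card_subtype_compl,
    ← Nat.card_eq_fintype_card (α := ↥O), ← Nat.card_eq_fintype_card,
    Nat.card_congr e5]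
  have c1 : Nat.card ↥O = Fintype.card F ^ finrank F ↥O := by
    have := Fintype.ofFinite ↥O
    rw [Nat.card_eq_fintype_card, card_eq_pow_finrank (K := F)]
  have c2 : Nat.card ↥(O ⊓ S) = Fintype.card F ^ finrank F ↥(O ⊓ S) := by
    have := Fintype.ofFinite ↥(O ⊓ S)
    rw [Nat.card_eq_fintype_card, card_eq_pow_finrank (K := F)]
  rw [c1, c2]

include hinj hran in
lemma suppWeight_map (V : Submodule F (Fin k → F)) :
    suppWeight (V.map G.vecMulLinear) =
      n - (Fintype.card F ^ finrank F ↥(orthoDot V) -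
        Fintype.card F ^ finrank F ↥(orthoDot V ⊓ S)) := by
  classical
  have hpred : ∀ idx : Fin n,
      (∃ c ∈ V.map G.vecMulLinear, c idx ≠ 0) ↔ ¬ ((fun r => G r idx) ∈ orthoDot V) := by
    intro idx
    rw [mem_orthoDot]
    push_neg
    constructor
    · rintro ⟨c, ⟨x, hx, rfl⟩, hc⟩
      refine ⟨x, hx, ?_⟩
      simpa [Matrix.vecMulLinear_apply, Matrix.vecMul, dotProduct] using hc
    · rintro ⟨x, hx, hxc⟩
      refine ⟨G.vecMulLinear x, ⟨x, hx, rfl⟩, ?_⟩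
      simpa [Matrix.vecMulLinear_apply, Matrix.vecMul, dotProduct] using hxc
  rw [suppWeight, Nat.card_congr (Equiv.subtypeEquivRight hpred),
    Nat.card_eq_fintype_card, Fintype.card_subtype_compl, Fintype.card_fin,
    ← Nat.card_eq_fintype_card, card_col_mem S G hinj hran (orthoDot V),
    card_mem_not_mem S (orthoDot V)]

include hinj hran in
lemma card_col_le (O : Submodule F E) :
    Fintype.card F ^ finrank F ↥O - Fintype.card F ^ finrank F ↥(O ⊓ S) ≤ n := by
  classical
  rw [← card_mem_not_mem S O, ← card_col_mem S G hinj hran O,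
    Nat.card_eq_fintype_card]
  have := Fintype.card_subtype_le (fun idx : Fin n => (fun r => G r idx) ∈ O)
  simpa using this
end

lemma int_arith1 {n i a b : ℕ} (h : (n:ℤ) - i = (a:ℤ) - b) (hin : i ≤ n) : b ≤ a := by omega

lemma int_arith2 {n i a b : ℕ} (h : (n:ℤ) - i = (a:ℤ) - b) (hin : i ≤ n) :
    i = n - (a - b) ∧ a - b ≤ n ∧ b ≤ a := by omega

lemma int_arith3 {n i a b : ℕ} (hi : i = n - (a - b)) (hab : b ≤ a) (han : a - b ≤ n) :
    (n:ℤ) - i = (a:ℤ) - b := by omega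

lemma int_arith4 {n i a b b' : ℕ} (h1 : (n:ℤ) - i = (a:ℤ) - b) (h2 : (n:ℤ) - i = (a:ℤ) - b') :
    b = b' := by omega

/-- Support weight distribution of the Solomon–Stiffler code with `p = 1`:
for `1 ≤ j ≤ k` and `0 ≤ i ≤ n`, the number of `j`-dimensional subcodes of `C`
with support weight `i` is `q^{(u-t)(k-j-t)} [k-u, k-j-t]_q [u, t]_q` if
`n - i = q^{k-j} - q^t` for some `max(0, u-j) ≤ t ≤ u`, and `0` otherwise. -/
theorem stmt_7 (q k n u : ℕ) (hk : 2 ≤ k) (hu1 : 1 ≤ u) (huk : u ≤ k - 1)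
    (F : Type) [Field F] [Fintype F] (hF : Fintype.card F = q)
    (S : Submodule F (Fin k → F)) (hS : Module.finrank F S = u)
    (G : Matrix (Fin k) (Fin n) F)
    (hinj : Function.Injective fun c : Fin n => (fun r => G r c))
    (hran : Set.range (fun c : Fin n => (fun r => G r c)) = (S : Set (Fin k → F))ᶜ)
    (hn : n = q ^ k - q ^ u)
    (j i : ℕ) (hj1 : 1 ≤ j) (hjk : j ≤ k) (hin : i ≤ n) :
    (∀ t : ℕ, u - j ≤ t → t ≤ u → ((n : ℤ) - i = (q : ℤ) ^ (k - j) - (q : ℤ) ^ t) →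
        Nat.card {D : Submodule F (Fin n → F) //
            D ≤ LinearMap.range G.vecMulLinear ∧ Module.finrank F D = j ∧ suppWeight D = i} =
          q ^ ((u - t) * (k - j - t)) *
            gbinom q ((k : ℤ) - u) ((k : ℤ) - j - t) * gbinom q u t) ∧
    ((¬ ∃ t : ℕ, u - j ≤ t ∧ t ≤ u ∧ ((n : ℤ) - i = (q : ℤ) ^ (k - j) - (q : ℤ) ^ t)) →
        Nat.card {D : Submodule F (Fin n → F) //
            D ≤ LinearMap.range G.vecMulLinear ∧ Module.finrank F D = j ∧ suppWeight D = i}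
          = 0) := by
  subst hF
  classical
  have hq2 : 2 ≤ Fintype.card F := Fintype.one_lt_card
  have hkE : finrank F (Fin k → F) = k := by
    rw [Module.finrank_fintype_fun_eq_card, Fintype.card_fin]
  have hukk : u < k := by omega
  have hSne : S ≠ ⊤ := by
    intro h
    rw [h, finrank_top, hkE] at hS
    omega
  have hspan : span F ((S : Set (Fin k → F))ᶜ) = ⊤ := by
    rw [eq_top_iff]
    intro z _
    by_cases hz : z ∈ S
    · obtain ⟨w, hw⟩ : ∃ w, w ∉ S := by
        by_contra hcon
        push_neg at hcon
        exact hSne (Submodule.eq_top_iff'.mpr hcon)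
      have h1 : z + w ∉ S := by
        intro hc
        exact hw (by simpa using S.sub_mem hc hz)
      have hzw : (z + w) ∈ span F ((S : Set (Fin k → F))ᶜ) :=
        subset_span (by simpa using h1)
      have hww : w ∈ span F ((S : Set (Fin k → F))ᶜ) :=
        subset_span (by simpa using hw)
      have := Submodule.sub_mem _ hzw hww
      simpa using this
    · exact subset_span (by simpa using hz)
  have hφinj : Function.Injective G.vecMulLinear := by
    rw [← LinearMap.ker_eq_bot, eq_bot_iff]
    intro x hx
    rw [LinearMap.mem_ker] at hx
    have hcols : span F ((S : Set (Fin k → F))ᶜ) ≤ LinearMap.ker (toDualDot x) := by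
      rw [Submodule.span_le]
      intro z hz
      rw [← hran] at hz
      obtain ⟨idx, rfl⟩ := hz
      have hzero : (G.vecMulLinear x) idx = 0 := by rw [hx]; rfl
      rw [SetLike.mem_coe, LinearMap.mem_ker]
      show (fun r => G r idx) ⬝ᵥ x = 0
      rw [dotProduct_comm]
      simpa [Matrix.vecMulLinear_apply, Matrix.vecMul, dotProduct] using hzero
    rw [hspan, top_le_iff, LinearMap.ker_eq_top] at hcols
    have : toDualDot x = toDualDot (0 : Fin k → F) := by rw [hcols, map_zero]
    rw [Submodule.mem_bot]
    exact toDualDot_injective this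
  -- analysis of a subcode via `comap`
  have hback : ∀ D : Submodule F (Fin n → F), D ≤ LinearMap.range G.vecMulLinear →
      finrank F D = j → suppWeight D = i →
      ∃ t' : ℕ, u - j ≤ t' ∧ t' ≤ u ∧ t' ≤ k - j ∧
        ((n : ℤ) - i = ((Fintype.card F : ℕ) : ℤ) ^ (k - j) - ((Fintype.card F : ℕ) : ℤ) ^ t') ∧
        finrank F ↥(Submodule.comap G.vecMulLinear D) = j ∧
        finrank F ↥(orthoDot (Submodule.comap G.vecMulLinear D) ⊓ S) = t' := by
    intro D hle hj hw
    have hmap : Submodule.map G.vecMulLinear (Submodule.comap G.vecMulLinear D) = D := by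
      rw [Submodule.map_comap_eq, inf_eq_right.mpr hle]
    have hj' : finrank F ↥(Submodule.comap G.vecMulLinear D) = j := by
      rw [(Submodule.equivMapOfInjective G.vecMulLinear hφinj _).finrank_eq, hmap]
      exact hj
    have hOr : finrank F ↥(orthoDot (Submodule.comap G.vecMulLinear D)) = k - j := by
      rw [finrank_orthoDot, hj']
    refine ⟨finrank F ↥(orthoDot (Submodule.comap G.vecMulLinear D) ⊓ S), ?_, ?_, ?_, ?_, hj', rfl⟩
    · have hsum := Submodule.finrank_sup_add_finrank_inf_eq
        (orthoDot (Submodule.comap G.vecMulLinear D)) S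
      have hsup : finrank F ↥(orthoDot (Submodule.comap G.vecMulLinear D) ⊔ S) ≤ k := by
        have h := (orthoDot (Submodule.comap G.vecMulLinear D) ⊔ S).finrank_le
        rw [hkE] at h
        exact h
      rw [hOr, hS] at hsum
      omega
    · rw [← hS]
      exact Submodule.finrank_mono inf_le_right
    · rw [← hOr]
      exact Submodule.finrank_mono inf_le_left
    · have htkj : finrank F ↥(orthoDot (Submodule.comap G.vecMulLinear D) ⊓ S) ≤ k - j := by
        rw [← hOr]
        exact Submodule.finrank_mono inf_le_left
      have hwD : suppWeight D = n - (Fintype.card F ^ (k - j) -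
          Fintype.card F ^ finrank F ↥(orthoDot (Submodule.comap G.vecMulLinear D) ⊓ S)) := by
        conv_lhs => rw [← hmap]
        rw [suppWeight_map S G hinj hran _, hOr]
      have hcle := card_col_le S G hinj hran (orthoDot (Submodule.comap G.vecMulLinear D))
      rw [hOr] at hcle
      have hple : Fintype.card F ^ finrank F ↥(orthoDot (Submodule.comap G.vecMulLinear D) ⊓ S) ≤
          Fintype.card F ^ (k - j) := Nat.pow_le_pow_right (by omega) htkj
      have hiw : i = n - (Fintype.card F ^ (k - j) -
          Fintype.card F ^ finrank F ↥(orthoDot (Submodule.comap G.vecMulLinear D) ⊓ S)) := by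
        rw [← hw, hwD]
      have key := int_arith3 hiw hple hcle
      push_cast at key ⊢
      exact key
  constructor
  · -- main counting
    intro t hut htu heq
    have heqN : (n : ℤ) - i = ((Fintype.card F ^ (k - j) : ℕ) : ℤ) -
        ((Fintype.card F ^ t : ℕ) : ℤ) := by push_cast; exact heq
    have hpowle : Fintype.card F ^ t ≤ Fintype.card F ^ (k - j) := int_arith1 heqN hin
    have htkj : t ≤ k - j := (Nat.pow_le_pow_iff_right (by omega)).mp hpowle
    obtain ⟨hi, hqn, -⟩ := int_arith2 heqN hin
    have eMain : {V : Submodule F (Fin k → F) //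
        finrank F ↥V = j ∧ finrank F ↥(orthoDot V ⊓ S) = t} ≃
        {D : Submodule F (Fin n → F) // D ≤ LinearMap.range G.vecMulLinear ∧
          Module.finrank F D = j ∧ suppWeight D = i} :=
      { toFun := fun V => ⟨V.1.map G.vecMulLinear, LinearMap.map_le_range, by
          rw [← (Submodule.equivMapOfInjective G.vecMulLinear hφinj V.1).finrank_eq]
          exact V.2.1, by
          rw [suppWeight_map S G hinj hran V.1, finrank_orthoDot, V.2.1, V.2.2]
          exact hi.symm⟩
        invFun := fun D => ⟨Submodule.comap G.vecMulLinear D.1, by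
          obtain ⟨t', h1, h2, h3, h4, h5, h6⟩ := hback D.1 D.2.1 D.2.2.1 D.2.2.2
          refine ⟨h5, ?_⟩
          have h4' : (n : ℤ) - i = ((Fintype.card F ^ (k - j) : ℕ) : ℤ) -
              ((Fintype.card F ^ t' : ℕ) : ℤ) := by push_cast; exact h4
          have hbb := int_arith4 heqN h4'
          rw [h6]
          exact (Nat.pow_right_injective hq2 hbb.symm)⟩
        left_inv := fun V => by
          apply Subtype.ext
          show Submodule.comap G.vecMulLinear (Submodule.map G.vecMulLinear V.1) = V.1
          exact Submodule.comap_map_eq_of_injective hφinj V.1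
        right_inv := fun D => by
          apply Subtype.ext
          show Submodule.map G.vecMulLinear (Submodule.comap G.vecMulLinear D.1) = D.1
          rw [Submodule.map_comap_eq, inf_eq_right.mpr D.2.1] }
    have eOrtho : {V : Submodule F (Fin k → F) //
        finrank F ↥V = j ∧ finrank F ↥(orthoDot V ⊓ S) = t} ≃
        {W : Submodule F (Fin k → F) //
          finrank F ↥W = k - j ∧ finrank F ↥(W ⊓ S) = t} :=
      { toFun := fun V => ⟨orthoDot V.1, by rw [finrank_orthoDot, V.2.1], V.2.2⟩
        invFun := fun W => ⟨orthoDot W.1, by rw [finrank_orthoDot, W.2.1]; omega, by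
          rw [orthoDot_orthoDot]
          exact W.2.2⟩
        left_inv := fun V => Subtype.ext (orthoDot_orthoDot V.1)
        right_inv := fun W => Subtype.ext (orthoDot_orthoDot W.1) }
    rw [Nat.card_congr (eMain.symm.trans eOrtho)]
    have key1 := card_inter_dim_mul S t (k - j) (by rw [hS]; exact htu) htkj
      (by rw [hkE, hS]; omega)
    rw [hkE, hS] at key1
    have hgb1 : ((k : ℤ) - u) = ((k - u : ℕ) : ℤ) := by omega
    have hgb2 : ((k : ℤ) - j - t) = ((k - j - t : ℕ) : ℤ) := by omega
    rw [hgb1, hgb2]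
    have key2 := gbinom_mul_eq (F := F) (k - u) (k - j - t) (by omega) hq2
    have key3 := gbinom_mul_eq (F := F) u t htu hq2
    have hpow : Fintype.card F ^ ((u - t) * (k - j - t)) *
        (Fintype.card F ^ t) ^ (k - j - t) = (Fintype.card F ^ u) ^ (k - j - t) := by
      rw [pow_mul, ← mul_pow, ← pow_add, Nat.sub_add_cancel htu]
    have hDt : 0 < (∏ x ∈ Finset.range t, (Fintype.card F ^ t - Fintype.card F ^ x)) *
        ((Fintype.card F ^ t) ^ (k - j - t) *
          ∏ x ∈ Finset.range (k - j - t), (Fintype.card F ^ (k - j - t) - Fintype.card F ^ x)) := by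
      have p1 := prod_sub_pow_pos (F := F) t hq2
      have p2 := prod_sub_pow_pos (F := F) (k - j - t) hq2
      have p3 : 0 < (Fintype.card F ^ t) ^ (k - j - t) := by positivity
      exact Nat.mul_pos p1 (Nat.mul_pos p3 p2)
    apply Nat.eq_of_mul_eq_mul_right hDt
    rw [key1]
    have expand : Fintype.card F ^ ((u - t) * (k - j - t)) *
        gbinom (Fintype.card F) ((k - u : ℕ) : ℤ) ((k - j - t : ℕ) : ℤ) *
        gbinom (Fintype.card F) (u : ℤ) (t : ℤ) *
        ((∏ x ∈ Finset.range t, (Fintype.card F ^ t - Fintype.card F ^ x)) *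
          ((Fintype.card F ^ t) ^ (k - j - t) *
            ∏ x ∈ Finset.range (k - j - t),
              (Fintype.card F ^ (k - j - t) - Fintype.card F ^ x))) =
        (gbinom (Fintype.card F) (u : ℤ) (t : ℤ) *
          ∏ x ∈ Finset.range t, (Fintype.card F ^ t - Fintype.card F ^ x)) *
        ((Fintype.card F ^ ((u - t) * (k - j - t)) * (Fintype.card F ^ t) ^ (k - j - t)) *
          (gbinom (Fintype.card F) ((k - u : ℕ) : ℤ) ((k - j - t : ℕ) : ℤ) *
            ∏ x ∈ Finset.range (k - j - t),
              (Fintype.card F ^ (k - j - t) - Fintype.card F ^ x))) := by ring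
    rw [expand, key3, key2, hpow]
  · -- empty case
    intro hno
    rw [Nat.card_eq_zero]
    left
    refine ⟨fun D => ?_⟩
    obtain ⟨t', h1, h2, h3, h4, h5, h6⟩ := hback D.1 D.2.1 D.2.2.1 D.2.2.2
    exact absurd ⟨t', h1, h2, by push_cast at h4 ⊢; exact h4⟩ hno
end

section
/- For every integer j with 1 ≤ j ≤ k, the j-th generalized Hamming weight of C satisfies d_j(C) = q^k − q^u − q^{k−j} + q^{u−j} if 1 ≤ j ≤ u, and d_j(C) = q^k − q^u − q^{k−j} + 1 if u ≤ j ≤ k (equivalently, d_j(C) = q^k − q^u − q^{k−j} + q^{max(u−j, 0)} for all 1 ≤ j ≤ k). -/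
open Matrix Module

/-- In a finite-dimensional space, every submodule contains a submodule of any
smaller dimension. -/
lemma aux_exists_sub {F V : Type*} [Field F] [AddCommGroup V] [Module F V]
    [FiniteDimensional F V] (P : Submodule F V) (m : ℕ) (hm : m ≤ Module.finrank F P) :
    ∃ A : Submodule F V, A ≤ P ∧ Module.finrank F A = m := by
  let b := Module.finBasis F P
  let f : Fin m → V := fun i => (b (Fin.castLE hm i) : V)
  have hli : LinearIndependent F f := by
    have h1 : LinearIndependent F fun i : Fin (Module.finrank F P) => ((b i : P) : V) :=
      b.linearIndependent.map' P.subtype P.ker_subtype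
    exact h1.comp (Fin.castLE hm) (Fin.castLE_injective hm)
  refine ⟨Submodule.span F (Set.range f), ?_, ?_⟩
  · rw [Submodule.span_le]
    rintro _ ⟨i, rfl⟩
    exact (b (Fin.castLE hm i)).2
  · rw [finrank_span_eq_card hli, Fintype.card_fin]

/-- Weight hierarchy of the Solomon–Stiffler code with `p = 1`: for `1 ≤ j ≤ k`,
the `j`-th generalized Hamming weight of `C` equals
`q^k - q^u - q^{k-j} + q^{max(u-j,0)}` (note `u - j` below is truncated
subtraction, so `q^(u-j) = q^{max(u-j,0)}`). -/
theorem stmt_8 (q k n u : ℕ) (hk : 2 ≤ k) (hu1 : 1 ≤ u) (huk : u ≤ k - 1)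
    (F : Type) [Field F] [Fintype F] (hF : Fintype.card F = q)
    (S : Submodule F (Fin k → F)) (hS : Module.finrank F S = u)
    (G : Matrix (Fin k) (Fin n) F)
    (hinj : Function.Injective fun c : Fin n => (fun r => G r c))
    (hran : Set.range (fun c : Fin n => (fun r => G r c)) = (S : Set (Fin k → F))ᶜ)
    (hn : n = q ^ k - q ^ u)
    (j : ℕ) (hj1 : 1 ≤ j) (hjk : j ≤ k) :
    (sInf {w | ∃ D : Submodule F (Fin n → F),
        D ≤ LinearMap.range G.vecMulLinear ∧ Module.finrank F D = j ∧ suppWeight D = w} : ℤ)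
      = (q : ℤ) ^ k - (q : ℤ) ^ u - (q : ℤ) ^ (k - j) + (q : ℤ) ^ (u - j) := by
  classical
  have hq1 : 1 ≤ q := hF ▸ Fintype.card_pos
  have hukk : u < k := by omega
  have hVrank : Module.finrank F (Fin k → F) = k := Module.finrank_fin_fun F
  -- the dot-product bilinear form
  set B : LinearMap.BilinForm F (Fin k → F) :=
      Matrix.toBilin' (1 : Matrix (Fin k) (Fin k) F) with hBdef
  have hBapp : ∀ x y : Fin k → F, B x y = x ⬝ᵥ y := by
    intro x y
    rw [hBdef, Matrix.toBilin'_apply', Matrix.one_mulVec]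
  have hBrefl : B.IsRefl := by
    intro x y h
    rw [hBapp] at h ⊢
    rwa [dotProduct_comm]
  have hBnd : B.Nondegenerate :=
    Matrix.Nondegenerate.toBilin' (Matrix.nondegenerate_of_det_ne_zero (by simp))
  have horth_rank : ∀ W : Submodule F (Fin k → F),
      Module.finrank F (B.orthogonal W) = k - Module.finrank F W := by
    intro W
    rw [LinearMap.BilinForm.finrank_orthogonal hBnd, hVrank]
  have horth_orth : ∀ W : Submodule F (Fin k → F), B.orthogonal (B.orthogonal W) = W :=
    fun W => LinearMap.BilinForm.orthogonal_orthogonal hBnd hBrefl W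
  -- cardinality of submodules
  have cardsub : ∀ P : Submodule F (Fin k → F),
      ((P : Set (Fin k → F))).ncard = q ^ Module.finrank F P := by
    intro P
    rw [← Nat.card_coe_set_eq, SetLike.coe_sort_coe, Nat.card_eq_fintype_card,
      Module.card_eq_pow_finrank (K := F), hF]
  have cardV : Nat.card (Fin k → F) = q ^ k := by
    rw [Nat.card_eq_fintype_card, Fintype.card_fun, Fintype.card_fin, hF]
  -- the coordinates of codewords
  have happ : ∀ (x : Fin k → F) (c : Fin n),
      G.vecMulLinear x c = x ⬝ᵥ (fun r => G r c) := by
    intro x c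
    rw [Matrix.vecMulLinear_apply]
    rfl
  -- columns avoid S
  have hcolS : ∀ c : Fin n, (fun r => G r c) ∉ S := by
    intro c hc
    have : (fun r => G r c) ∈ (S : Set (Fin k → F))ᶜ := by
      rw [← hran]; exact Set.mem_range_self c
    exact this hc
  -- the key counting identity
  have main : ∀ W : Submodule F (Fin k → F),
      suppWeight (W.map G.vecMulLinear) + q ^ u + q ^ (k - Module.finrank F W)
        = q ^ k + q ^ Module.finrank F ↥(S ⊓ B.orthogonal W) := by
    intro W
    set T := B.orthogonal W with hT
    have hmemT : ∀ v : Fin k → F, v ∈ T ↔ ∀ x ∈ W, x ⬝ᵥ v = 0 := by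
      intro v
      rw [hT, LinearMap.BilinForm.mem_orthogonal_iff]
      constructor
      · intro h x hx
        have := h x hx
        rwa [hBapp] at this
      · intro h x hx
        rw [hBapp]
        exact h x hx
    have hmem : ∀ c : Fin n,
        (∃ y ∈ W.map G.vecMulLinear, y c ≠ 0) ↔ (fun r => G r c) ∉ T := by
      intro c
      rw [hmemT]
      constructor
      · rintro ⟨y, ⟨x, hx, rfl⟩, hy⟩ hall
        apply hy
        rw [happ]
        exact hall x hx
      · intro h
        by_contra hno
        push_neg at hno
        apply h
        intro x hx
        have := hno (G.vecMulLinear x) ⟨x, hx, rfl⟩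
        rwa [happ] at this
    have e1 : suppWeight (W.map G.vecMulLinear)
        = Nat.card {c : Fin n // (fun r => G r c) ∉ T} := by
      unfold suppWeight
      exact Nat.card_congr (Equiv.subtypeEquivRight hmem)
    have e2 : {c : Fin n // (fun r => G r c) ∉ T}
        ≃ ((↑S ∪ ↑T : Set (Fin k → F))ᶜ : Set (Fin k → F)) := by
      refine Equiv.ofBijective (fun c => ⟨(fun r => G r c.1), ?_⟩) ⟨?_, ?_⟩
      · rw [Set.mem_compl_iff, Set.mem_union]
        push_neg
        exact ⟨hcolS c.1, c.2⟩
      · intro c₁ c₂ h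
        have := congrArg Subtype.val h
        exact Subtype.ext (hinj this)
      · rintro ⟨v, hv⟩
        rw [Set.mem_compl_iff, Set.mem_union] at hv
        push_neg at hv
        have : v ∈ Set.range (fun c : Fin n => (fun r => G r c)) := by
          rw [hran]; exact hv.1
        obtain ⟨c, hc⟩ := this
        have hc' : (fun r => G r c) = v := hc
        refine ⟨⟨c, ?_⟩, ?_⟩
        · rw [hc']; exact hv.2
        · exact Subtype.ext hc'
    have e3 : suppWeight (W.map G.vecMulLinear)
        = ((↑S ∪ ↑T : Set (Fin k → F))ᶜ).ncard := by
      rw [e1, Nat.card_congr e2, Nat.card_coe_set_eq]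
    have h4 := Set.ncard_add_ncard_compl (↑S ∪ ↑T : Set (Fin k → F))
    have h5 := Set.ncard_union_add_ncard_inter (↑S : Set (Fin k → F)) (↑T : Set (Fin k → F))
    rw [← Submodule.coe_inf, cardsub, cardsub, cardsub, hS] at h5
    rw [cardV] at h4
    have hTr : Module.finrank F ↥T = k - Module.finrank F ↥W := by
      rw [hT, horth_rank]
    rw [hTr] at h5
    rw [e3]
    omega
  -- lower bound on the intersection dimension
  have lower : ∀ W : Submodule F (Fin k → F), Module.finrank F W = j →
      u - j ≤ Module.finrank F ↥(S ⊓ B.orthogonal W) := by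
    intro W hW
    have h1 := Submodule.finrank_sup_add_finrank_inf_eq S (B.orthogonal W)
    have h2 : Module.finrank F ↥(S ⊔ B.orthogonal W) ≤ k := by
      have h := Submodule.finrank_le (S ⊔ B.orthogonal W)
      rwa [hVrank] at h
    rw [hS, horth_rank, hW] at h1
    omega
  -- existence of an optimal subspace
  have exist : ∃ W : Submodule F (Fin k → F), Module.finrank F W = j ∧
      Module.finrank F ↥(S ⊓ B.orthogonal W) = u - j := by
    obtain ⟨S', hScompl⟩ := Submodule.exists_isCompl S
    have hS' : Module.finrank F S' = k - u := by
      have := Submodule.finrank_add_eq_of_isCompl hScompl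
      rw [hS, hVrank] at this
      omega
    obtain ⟨A, hAS, hA⟩ := aux_exists_sub S (u - j) (by rw [hS]; omega)
    obtain ⟨Bs, hBS', hBs⟩ := aux_exists_sub S' ((k - j) - (u - j)) (by rw [hS']; omega)
    have hABbot : A ⊓ Bs = ⊥ := by
      have h := inf_le_inf hAS hBS'
      rw [hScompl.inf_eq_bot] at h
      exact le_bot_iff.mp h
    have hTrank : Module.finrank F ↥(A ⊔ Bs) = k - j := by
      have := Submodule.finrank_sup_add_finrank_inf_eq A Bs
      rw [hABbot, finrank_bot, hA, hBs] at this
      omega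
    have hTS : (A ⊔ Bs) ⊓ S = A := by
      rw [sup_inf_assoc_of_le _ hAS]
      have hb : Bs ⊓ S = ⊥ := by
        have h := inf_le_inf hBS' (le_refl S)
        rw [hScompl.symm.inf_eq_bot] at h
        exact le_bot_iff.mp h
      rw [hb, sup_bot_eq]
    refine ⟨B.orthogonal (A ⊔ Bs), ?_, ?_⟩
    · rw [horth_rank, hTrank]; omega
    · rw [horth_orth, inf_comm, hTS, hA]
  -- injectivity of the encoding map
  have hker : ∀ x : Fin k → F, G.vecMulLinear x = 0 → x = 0 := by
    intro x hx
    have hall : ∀ v : Fin k → F, v ∉ S → x ⬝ᵥ v = 0 := by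
      intro v hv
      have : v ∈ Set.range (fun c : Fin n => (fun r => G r c)) := by
        rw [hran]; exact hv
      obtain ⟨c, hc⟩ := this
      have hc' : (fun r => G r c) = v := hc
      have h := congrFun hx c
      rw [happ] at h
      rw [← hc']
      exact h
    obtain ⟨w, hw⟩ : ∃ w, w ∉ S := by
      by_contra hcon
      push_neg at hcon
      have htop : S = ⊤ := Submodule.eq_top_iff'.mpr hcon
      rw [htop, finrank_top, hVrank] at hS
      omega
    have hxall : ∀ v : Fin k → F, x ⬝ᵥ v = 0 := by
      intro v
      by_cases hv : v ∈ S
      · have h1 : v + w ∉ S := by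
          intro hmem
          exact hw (by simpa using S.sub_mem hmem hv)
        have h2 := hall (v + w) h1
        have h3 := hall w hw
        rw [dotProduct_add, h3, add_zero] at h2
        exact h2
      · exact hall v hv
    funext i
    have := hxall (Pi.single i 1)
    rwa [dotProduct_single, mul_one] at this
  have hf : Function.Injective G.vecMulLinear :=
    LinearMap.ker_eq_bot.mp (LinearMap.ker_eq_bot'.mpr hker)
  have frmap : ∀ W : Submodule F (Fin k → F),
      Module.finrank F (W.map G.vecMulLinear) = Module.finrank F W :=
    fun W => (LinearEquiv.finrank_eq (Submodule.equivMapOfInjective _ hf W)).symm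
  -- put everything together
  obtain ⟨W₀, hW₀rank, hW₀inf⟩ := exist
  set w₀ := suppWeight (W₀.map G.vecMulLinear) with hw₀
  have heq₀ : w₀ + q ^ u + q ^ (k - j) = q ^ k + q ^ (u - j) := by
    have := main W₀
    rwa [hW₀rank, hW₀inf] at this
  have hlbD : ∀ D : Submodule F (Fin n → F), D ≤ LinearMap.range G.vecMulLinear →
      Module.finrank F D = j → w₀ ≤ suppWeight D := by
    intro D hD hDrank
    have hDW : (D.comap G.vecMulLinear).map G.vecMulLinear = D :=
      Submodule.map_comap_eq_self hD
    have hWrank : Module.finrank F (D.comap G.vecMulLinear) = j := by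
      have h := frmap (D.comap G.vecMulLinear)
      rw [hDW] at h
      rw [← h, hDrank]
    have heq := main (D.comap G.vecMulLinear)
    rw [hDW, hWrank] at heq
    have hd := lower _ hWrank
    have hpow : q ^ (u - j) ≤ q ^ Module.finrank F
        ↥(S ⊓ B.orthogonal (D.comap G.vecMulLinear)) :=
      Nat.pow_le_pow_right hq1 hd
    omega
  have hmem₀ : ((w₀ : ℤ)) ∈ {w : ℤ | ∃ D : Submodule F (Fin n → F),
      D ≤ LinearMap.range G.vecMulLinear ∧ Module.finrank F D = j ∧ (suppWeight D : ℤ) = w} :=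
    ⟨W₀.map G.vecMulLinear, LinearMap.map_le_range, by rw [frmap, hW₀rank], rfl⟩
  have hbdd : BddBelow {w : ℤ | ∃ D : Submodule F (Fin n → F),
      D ≤ LinearMap.range G.vecMulLinear ∧ Module.finrank F D = j ∧ (suppWeight D : ℤ) = w} := by
    refine ⟨0, ?_⟩
    rintro w ⟨D, _, _, rfl⟩
    exact Int.ofNat_nonneg _
  have hSinf : sInf {w : ℤ | ∃ D : Submodule F (Fin n → F),
      D ≤ LinearMap.range G.vecMulLinear ∧ Module.finrank F D = j ∧ (suppWeight D : ℤ) = w}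
        = (w₀ : ℤ) := by
    refine le_antisymm (csInf_le hbdd hmem₀) (le_csInf ⟨_, hmem₀⟩ ?_)
    rintro w ⟨D, hD, hDrank, rfl⟩
    exact_mod_cast hlbD D hD hDrank
  rw [hSinf]
  have hcast := congrArg (Nat.cast : ℕ → ℤ) heq₀
  push_cast at hcast
  linarith
end
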